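/- arXiv:2305.11751 — 5 statements merged into one kernel-verified Lean document; each statement's English description precedes it below -/
import Mathlib

section
/- Let H be a real separable Hilbert space, let P be a Borel probability measure on H belonging to the class P^ℓ(H), and let Q be a Borel probability measure on H whose support is bounded (contained in some ball B(0,M)). Suppose f and g are proper lower semicontinuous convex functions on H and S, T : H → H are Borel maps such that ∂f(x) = {S(x)} and ∂g(x) = {T(x)} for P-almost every x, and such that the pushforwards of P under S and under T both equal Q. Then S(x) = T(x) for P-almost every x. -/
open MeasureTheory Filter Topology

noncomputable section

/-- The subdifferential of an extended-real-valued function on a Hilbert space. -/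
def subdiff {H : Type*} [NormedAddCommGroup H] [InnerProductSpace ℝ H]
    (f : H → EReal) (x : H) : Set H :=
  {y | ∀ z : H, f x + ((inner ℝ y (z - x) : ℝ) : EReal) ≤ f z}

section AuxLemmas

variable {H : Type*} [NormedAddCommGroup H] [InnerProductSpace ℝ H]

/-- Legendre transform -/
def estar (f : H → EReal) (y : H) : EReal :=
  ⨆ x : H, ((inner ℝ x y : ℝ) : EReal) + (- f x)

lemma le_estar (f : H → EReal) (x y : H) :
    ((inner ℝ x y : ℝ) : EReal) + (- f x) ≤ estar f y :=
  le_iSup (fun x : H => ((inner ℝ x y : ℝ) : EReal) + (- f x)) x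

lemma estar_ne_bot (f : H → EReal) (y x₀ : H) (h1 : f x₀ ≠ ⊤) (h2 : f x₀ ≠ ⊥) :
    estar f y ≠ ⊥ := by
  have h := le_estar f x₀ y
  rw [← EReal.coe_toReal h1 h2] at h
  intro hb
  rw [hb, ← EReal.coe_neg, ← EReal.coe_add, le_bot_iff] at h
  exact EReal.coe_ne_bot _ h

lemma estar_eq_of_mem_subdiff (f : H → EReal) (hbot : ∀ z, f z ≠ ⊥) {x y : H}
    (hy : y ∈ subdiff f x) (r : ℝ) (hr : f x = (r : ℝ)) :
    estar f y = ((inner ℝ x y - r : ℝ) : EReal) := by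
  apply le_antisymm
  · apply iSup_le
    intro z
    by_cases hz : f z = ⊤
    · simp [hz]
    · obtain ⟨s, hs⟩ : ∃ s : ℝ, f z = (s : ℝ) :=
        ⟨(f z).toReal, (EReal.coe_toReal hz (hbot z)).symm⟩
      have key := hy z
      rw [hr, hs, ← EReal.coe_add, EReal.coe_le_coe_iff] at key
      have hiz : (inner ℝ y (z - x) : ℝ) = (inner ℝ z y : ℝ) - (inner ℝ x y : ℝ) := by
        rw [inner_sub_right, real_inner_comm y z, real_inner_comm y x]
      rw [hs, ← EReal.coe_neg, ← EReal.coe_add, EReal.coe_le_coe_iff]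
      rw [hiz] at key
      linarith
  · have h := le_estar f x y
    rw [hr, ← EReal.coe_neg, ← EReal.coe_add] at h
    rwa [sub_eq_add_neg]

lemma mem_subdiff_of_estar (f : H → EReal) (hbot : ∀ z, f z ≠ ⊥) {x y : H} (r c : ℝ)
    (hr : f x = (r : ℝ)) (hc : estar f y = (c : ℝ)) (hineq : r + c ≤ (inner ℝ x y : ℝ)) :
    y ∈ subdiff f x := by
  intro z
  by_cases hz : f z = ⊤
  · rw [hz]; exact le_top
  · obtain ⟨s, hs⟩ : ∃ s : ℝ, f z = (s : ℝ) :=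
      ⟨(f z).toReal, (EReal.coe_toReal hz (hbot z)).symm⟩
    have h := le_estar f z y
    rw [hs, hc, ← EReal.coe_neg, ← EReal.coe_add, EReal.coe_le_coe_iff] at h
    have hiz : (inner ℝ y (z - x) : ℝ) = (inner ℝ z y : ℝ) - (inner ℝ x y : ℝ) := by
      rw [inner_sub_right, real_inner_comm y z, real_inner_comm y x]
    rw [hr, hs, ← EReal.coe_add, EReal.coe_le_coe_iff, hiz]
    linarith

lemma estar_measurable [MeasurableSpace H] [OpensMeasurableSpace H] (f : H → EReal) :
    Measurable (estar f) := by
  have h : LowerSemicontinuous (estar f) := by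
    apply lowerSemicontinuous_iSup
    intro x
    by_cases hx : (- f x) = ⊥
    · have : (fun y : H => ((inner ℝ x y : ℝ) : EReal) + (- f x)) = fun _ => ⊥ := by
        funext y; rw [hx, EReal.add_bot]
      rw [this]; exact lowerSemicontinuous_const
    · by_cases hx2 : (- f x) = ⊤
      · have : (fun y : H => ((inner ℝ x y : ℝ) : EReal) + (- f x)) = fun _ => ⊤ := by
          funext y; rw [hx2, EReal.add_top_of_ne_bot (EReal.coe_ne_bot _)]
        rw [this]; exact lowerSemicontinuous_const
      · obtain ⟨t, ht⟩ : ∃ t : ℝ, (- f x) = (t : ℝ) :=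
          ⟨(- f x).toReal, (EReal.coe_toReal hx2 hx).symm⟩
        have : (fun y : H => ((inner ℝ x y : ℝ) : EReal) + (- f x))
            = fun y : H => (((inner ℝ x y : ℝ) + t : ℝ) : EReal) := by
          funext y; rw [ht, ← EReal.coe_add]
        rw [this]
        apply Continuous.lowerSemicontinuous
        exact continuous_coe_real_ereal.comp
          ((continuous_const.inner continuous_id).add continuous_const)
  exact h.measurable

/-- identically distributed + a.e. ordered ⇒ a.e. equal -/
lemma ae_eq_of_map_eq_of_ae_le {α : Type*} [MeasurableSpace α] (P : Measure α)
    [IsFiniteMeasure P] (X Y : α → ℝ) (hX : Measurable X) (hY : Measurable Y)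
    (hmap : P.map X = P.map Y) (hle : ∀ᵐ a ∂P, Y a ≤ X a) :
    ∀ᵐ a ∂P, X a = Y a := by
  have hAB : ∀ t : ℝ, P ({a | t < X a} \ {a | t < Y a}) = 0 := by
    intro t
    have h1 : P {a | t < X a} = P {a | t < Y a} := by
      have h := congrArg (fun μ : Measure ℝ => μ (Set.Ioi t)) hmap
      simp only [Measure.map_apply hX measurableSet_Ioi,
        Measure.map_apply hY measurableSet_Ioi] at h
      exact h
    set A := {a | t < X a} with hA
    set B := {a | t < Y a} with hB
    have hAm : MeasurableSet A := hX measurableSet_Ioi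
    have hBm : MeasurableSet B := hY measurableSet_Ioi
    have h2 : P B ≤ P (A ∩ B) := by
      apply measure_mono_ae
      filter_upwards [hle] with a ha hb
      exact ⟨lt_of_lt_of_le hb ha, hb⟩
    have h3 : P (A ∩ B) + P (A \ B) = P A := measure_inter_add_diff A hBm
    have hfin : P (A ∩ B) ≠ ⊤ := measure_ne_top P _
    have h4 : P (A ∩ B) + P (A \ B) ≤ P (A ∩ B) + 0 := by
      rw [add_zero, h3, h1]; exact h2
    exact le_antisymm ((ENNReal.add_le_add_iff_left hfin).mp h4) zero_le
  have h0 : P {a | Y a < X a} = 0 := by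
    have hU : P (⋃ t : ℚ, ({a | (t : ℝ) < X a} \ {a | (t : ℝ) < Y a})) = 0 :=
      measure_iUnion_null fun t : ℚ => hAB (t : ℝ)
    apply measure_mono_null _ hU
    intro a ha
    have ha' : Y a < X a := ha
    obtain ⟨t, ht1, ht2⟩ := exists_rat_btwn ha'
    exact Set.mem_iUnion.mpr ⟨t, ht2, not_lt.mpr ht1.le⟩
  have h0' : ∀ᵐ a ∂P, ¬ (Y a < X a) := by
    rw [ae_iff]
    simpa using h0
  filter_upwards [hle, h0'] with a h1 h2
  exact le_antisymm (not_lt.mp h2) h1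

end AuxLemmas

/-- The graph of the subdifferential. -/
def subdiffGraph {H : Type*} [NormedAddCommGroup H] [InnerProductSpace ℝ H]
    (f : H → EReal) : Set (H × H) :=
  {p | p.2 ∈ subdiff f p.1}

/-- Convexity for extended-real-valued functions. -/
def EConvexOn {H : Type*} [NormedAddCommGroup H] [InnerProductSpace ℝ H]
    (f : H → EReal) : Prop :=
  ∀ x y : H, ∀ t : ℝ, 0 ≤ t → t ≤ 1 →
    f (t • x + (1 - t) • y) ≤ (t : EReal) * f x + ((1 - t : ℝ) : EReal) * f y

/-- A proper lower semicontinuous convex function `H → (-∞, +∞]`. -/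
def ProperLscConvex {H : Type*} [NormedAddCommGroup H] [InnerProductSpace ℝ H]
    (f : H → EReal) : Prop :=
  (∃ x, f x ≠ ⊤) ∧ (∀ x, f x ≠ ⊥) ∧ LowerSemicontinuous f ∧ EConvexOn f

/-- A Lipschitz hypersurface: `{z + τ(z) • v : z ∈ (span v)ᵒᵖ}` for Lipschitz `τ`. -/
def IsLipschitzHypersurface {H : Type*} [NormedAddCommGroup H] [InnerProductSpace ℝ H]
    (A : Set H) : Prop :=
  ∃ v : H, v ≠ 0 ∧ ∃ (τ : H → ℝ) (K : NNReal),
    LipschitzOnWith K τ ((Submodule.span ℝ {v})ᗮ : Set H) ∧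
    A = (fun z : H => z + τ z • v) '' ((Submodule.span ℝ {v})ᗮ : Set H)

/-- Topological support of a measure. -/
def msupport {X : Type*} [TopologicalSpace X] {m : MeasurableSpace X}
    (μ : Measure X) : Set X :=
  {x | ∀ U : Set X, IsOpen U → x ∈ U → 0 < μ U}

/-- The class `P^ℓ(H)`: measures giving zero mass to all Lipschitz hypersurfaces. -/
def IsLipschitzNull {H : Type*} [NormedAddCommGroup H] [InnerProductSpace ℝ H]
    {m : MeasurableSpace H} (P : Measure H) : Prop :=
  ∀ A : Set H, IsLipschitzHypersurface A → P A = 0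

/-- Cyclical monotonicity of a subset of `H × H`. -/
def CyclicallyMonotone {H : Type*} [NormedAddCommGroup H] [InnerProductSpace ℝ H]
    (Γ : Set (H × H)) : Prop :=
  ∀ (n : ℕ) (q : Fin (n + 1) → H × H), (∀ k, q k ∈ Γ) →
    ∑ k : Fin (n + 1), (inner ℝ (q k).1 ((q (k + 1)).2 - (q k).2) : ℝ) ≤ 0

/-- Weak convergence of a sequence of measures against bounded continuous functions. -/
def WeakConv {X : Type*} [TopologicalSpace X] {m : MeasurableSpace X}
    (μ : ℕ → Measure X) (ν : Measure X) : Prop :=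
  ∀ f : BoundedContinuousFunction X ℝ,
    Tendsto (fun n => ∫ x, f x ∂(μ n)) atTop (𝓝 (∫ x, f x ∂ν))

theorem mccann_uniqueness_hilbert
    {H : Type*} [NormedAddCommGroup H] [InnerProductSpace ℝ H]
    [CompleteSpace H] [SecondCountableTopology H] [MeasurableSpace H] [BorelSpace H]
    (P Q : Measure H) [IsProbabilityMeasure P] [IsProbabilityMeasure Q]
    (hP : IsLipschitzNull P)
    (M : ℝ) (hQbdd : msupport Q ⊆ Metric.closedBall (0 : H) M)
    (f g : H → EReal) (hf : ProperLscConvex f) (hg : ProperLscConvex g)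
    (S T : H → H) (hSm : Measurable S) (hTm : Measurable T)
    (hfS : ∀ᵐ x ∂P, subdiff f x = {S x}) (hgT : ∀ᵐ x ∂P, subdiff g x = {T x})
    (hSQ : P.map S = Q) (hTQ : P.map T = Q) :
    ∀ᵐ x ∂P, S x = T x := by
  obtain ⟨⟨x₀, hfx₀⟩, hfbot, -, -⟩ := hf
  obtain ⟨⟨z₀, hgz₀⟩, hgbot, -, -⟩ := hg
  have hST : P.map S = P.map T := by rw [hSQ, hTQ]
  have hfS' : ∀ᵐ x ∂P, S x ∈ subdiff f x := by
    filter_upwards [hfS] with x hx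
    rw [hx]; rfl
  have hgT' : ∀ᵐ x ∂P, T x ∈ subdiff g x := by
    filter_upwards [hgT] with x hx
    rw [hx]; rfl
  have hffin : ∀ᵐ x ∂P, f x ≠ ⊤ := by
    filter_upwards [hfS'] with x hx htop
    have h := hx x₀
    rw [htop, EReal.top_add_coe] at h
    exact hfx₀ (top_le_iff.mp h)
  have hgfin : ∀ᵐ x ∂P, g x ≠ ⊤ := by
    filter_upwards [hgT'] with x hx htop
    have h := hx z₀
    rw [htop, EReal.top_add_coe] at h
    exact hgz₀ (top_le_iff.mp h)
  have hFbot : ∀ y, estar f y ≠ ⊥ := fun y => estar_ne_bot f y x₀ hfx₀ (hfbot x₀)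
  have hGbot : ∀ y, estar g y ≠ ⊥ := fun y => estar_ne_bot g y z₀ hgz₀ (hgbot z₀)
  have hFS : ∀ᵐ x ∂P, estar f (S x)
      = (((inner ℝ x (S x) : ℝ) - (f x).toReal : ℝ) : EReal) := by
    filter_upwards [hfS', hffin] with x hx hfin
    exact estar_eq_of_mem_subdiff f hfbot hx _ (EReal.coe_toReal hfin (hfbot x)).symm
  have hGT : ∀ᵐ x ∂P, estar g (T x)
      = (((inner ℝ x (T x) : ℝ) - (g x).toReal : ℝ) : EReal) := by
    filter_upwards [hgT', hgfin] with x hx hfin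
    exact estar_eq_of_mem_subdiff g hgbot hx _ (EReal.coe_toReal hfin (hgbot x)).symm
  have hFm : Measurable (estar f) := estar_measurable f
  have hGm : Measurable (estar g) := estar_measurable g
  -- transfer finiteness through the common pushforward
  have key : ∀ (F : H → EReal) (U V : H → H), Measurable F → Measurable U → Measurable V →
      P.map U = P.map V → (∀ᵐ x ∂P, F (U x) ≠ ⊤) → (∀ᵐ x ∂P, F (V x) ≠ ⊤) := by
    intro F U V hF hU hV hUV h
    have hA : MeasurableSet {y | F y = ⊤} := hF (measurableSet_singleton ⊤)
    have hUset : {x | ¬ F (U x) ≠ ⊤} = U ⁻¹' {y | F y = ⊤} := by ext x; simp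
    have hVset : {x | ¬ F (V x) ≠ ⊤} = V ⁻¹' {y | F y = ⊤} := by ext x; simp
    rw [ae_iff, hUset] at h
    rw [ae_iff, hVset, ← Measure.map_apply hV hA, ← hUV, Measure.map_apply hU hA, h]
  have hFT : ∀ᵐ x ∂P, estar f (T x) ≠ ⊤ := by
    refine key (estar f) S T hFm hSm hTm hST ?_
    filter_upwards [hFS] with x hx
    rw [hx]; exact EReal.coe_ne_top _
  have hGS : ∀ᵐ x ∂P, estar g (S x) ≠ ⊤ := by
    refine key (estar g) T S hGm hTm hSm hST.symm ?_
    filter_upwards [hGT] with x hx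
    rw [hx]; exact EReal.coe_ne_top _
  set u : H → ℝ := fun y => (estar f y).toReal - (estar g y).toReal with hu_def
  have hu : Measurable u :=
    (measurable_ereal_toReal.comp hFm).sub (measurable_ereal_toReal.comp hGm)
  have hmap : P.map (fun x => u (T x)) = P.map (fun x => u (S x)) := by
    have h1 : (fun x => u (T x)) = u ∘ T := rfl
    have h2 : (fun x => u (S x)) = u ∘ S := rfl
    rw [h1, h2, ← Measure.map_map hu hTm, ← Measure.map_map hu hSm, hST]
  have hle : ∀ᵐ x ∂P, u (S x) ≤ u (T x) := by
    filter_upwards [hffin, hgfin, hFS, hGT, hFT, hGS] with x h1 h2 h3 h4 h5 h6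
    set r := (f x).toReal
    set s := (g x).toReal
    have hfx : f x = (r : ℝ) := (EReal.coe_toReal h1 (hfbot x)).symm
    have hgx : g x = (s : ℝ) := (EReal.coe_toReal h2 (hgbot x)).symm
    set a' := (estar f (T x)).toReal with ha'
    set b' := (estar g (S x)).toReal with hb'
    have hFTx : estar f (T x) = (a' : ℝ) := (EReal.coe_toReal h5 (hFbot _)).symm
    have hGSx : estar g (S x) = (b' : ℝ) := (EReal.coe_toReal h6 (hGbot _)).symm
    have hfen1 : (inner ℝ x (T x) : ℝ) - r ≤ a' := by
      have h := le_estar f x (T x)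
      rw [hfx, hFTx, ← EReal.coe_neg, ← EReal.coe_add, EReal.coe_le_coe_iff] at h
      linarith
    have hfen2 : (inner ℝ x (S x) : ℝ) - s ≤ b' := by
      have h := le_estar g x (S x)
      rw [hgx, hGSx, ← EReal.coe_neg, ← EReal.coe_add, EReal.coe_le_coe_iff] at h
      linarith
    have huS : u (S x) = ((inner ℝ x (S x) : ℝ) - r) - b' := by
      simp only [hu_def, h3, hGSx, EReal.toReal_coe]
    have huT : u (T x) = a' - ((inner ℝ x (T x) : ℝ) - s) := by
      simp only [hu_def, h4, hFTx, EReal.toReal_coe]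
    rw [huS, huT]
    linarith
  have heq : ∀ᵐ x ∂P, u (T x) = u (S x) :=
    ae_eq_of_map_eq_of_ae_le P (fun x => u (T x)) (fun x => u (S x))
      (hu.comp hTm) (hu.comp hSm) hmap hle
  filter_upwards [hffin, hgfin, hFS, hGT, hFT, hGS, heq, hfS] with x h1 h2 h3 h4 h5 h6 h7 h8
  set r := (f x).toReal
  set s := (g x).toReal
  have hfx : f x = (r : ℝ) := (EReal.coe_toReal h1 (hfbot x)).symm
  set a' := (estar f (T x)).toReal with ha'
  set b' := (estar g (S x)).toReal with hb'
  have hFTx : estar f (T x) = (a' : ℝ) := (EReal.coe_toReal h5 (hFbot _)).symm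
  have hGSx : estar g (S x) = (b' : ℝ) := (EReal.coe_toReal h6 (hGbot _)).symm
  have hfen1 : (inner ℝ x (T x) : ℝ) - r ≤ a' := by
    have h := le_estar f x (T x)
    rw [hfx, hFTx, ← EReal.coe_neg, ← EReal.coe_add, EReal.coe_le_coe_iff] at h
    linarith
  have hfen2 : (inner ℝ x (S x) : ℝ) - s ≤ b' := by
    have hgx : g x = (s : ℝ) := (EReal.coe_toReal h2 (hgbot x)).symm
    have h := le_estar g x (S x)
    rw [hgx, hGSx, ← EReal.coe_neg, ← EReal.coe_add, EReal.coe_le_coe_iff] at h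
    linarith
  have huS : u (S x) = ((inner ℝ x (S x) : ℝ) - r) - b' := by
    simp only [hu_def, h3, hGSx, EReal.toReal_coe]
  have huT : u (T x) = a' - ((inner ℝ x (T x) : ℝ) - s) := by
    simp only [hu_def, h4, hFTx, EReal.toReal_coe]
  rw [huS, huT] at h7
  have ha'eq : a' = (inner ℝ x (T x) : ℝ) - r := by linarith
  have hc : estar f (T x) = (((inner ℝ x (T x) : ℝ) - r : ℝ) : EReal) := by
    rw [hFTx, ha'eq]
  have hmem : T x ∈ subdiff f x :=
    mem_subdiff_of_estar f hfbot r ((inner ℝ x (T x) : ℝ) - r) hfx hc (by linarith)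
  rw [h8] at hmem
  exact (Set.eq_of_mem_singleton hmem).symm

end
end

section
/- Let H be a real separable Hilbert space and let f, g : H → (-∞,+∞] be proper lower semicontinuous convex functions. Let p, q ∈ H be points at which both f and g are finite and continuous, and suppose f(p) − f(q) = g(p) − g(q). Then there exist t ∈ (0,1), u ∈ ∂f(x_t), and v ∈ ∂g(x_t), where x_t := t·p + (1−t)·q, such that ⟨u − v, p − q⟩ = 0. -/
open MeasureTheory Filter Topology

noncomputable section

open Set in
lemma ereal_ray (ψ : ℝ → EReal)
    (hconv : ∀ r₁ r₂ lam : ℝ, 0 ≤ lam → lam ≤ 1 →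
      ψ (lam * r₁ + (1 - lam) * r₂) ≤ (lam : EReal) * ψ r₁ + ((1 - lam : ℝ) : EReal) * ψ r₂)
    (hbot : ∀ r, ψ r ≠ ⊥)
    (A B s e : ℝ) (he : 0 < e) (h0 : ψ 0 = (A : EReal)) (hB : ψ e = (B : EReal))
    (hAB : A + s * e ≤ B) :
    ∀ r, e ≤ r → ((A + s * r : ℝ) : EReal) ≤ ψ r := by
  intro r hr
  rcases eq_or_lt_of_le hr with hre | hre
  · rw [← hre, hB]
    exact_mod_cast hAB
  rcases eq_or_ne (ψ r) ⊤ with htop | htop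
  · rw [htop]; exact le_top
  have hm : ψ r = ((ψ r).toReal : EReal) := (EReal.coe_toReal htop (hbot r)).symm
  set m : ℝ := (ψ r).toReal with hmdef
  have hrpos : 0 < r := lt_trans he hre
  set lam : ℝ := e / r with hlam
  have hlam0 : 0 < lam := div_pos he hrpos
  have hlam1 : lam ≤ 1 := by
    rw [hlam, div_le_one hrpos]; exact hr
  have hkey := hconv r 0 lam hlam0.le hlam1
  rw [mul_zero, add_zero, hlam, div_mul_cancel₀ _ (ne_of_gt hrpos)] at hkey
  rw [hB, h0, hm, ← EReal.coe_mul, ← EReal.coe_mul, ← EReal.coe_add] at hkey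
  rw [EReal.coe_le_coe_iff] at hkey
  -- B ≤ lam * m + (1 - lam) * A
  have hse : s * e = s * lam * r := by
    rw [hlam]; field_simp
  have h1 : lam * (A + s * r) ≤ lam * m := by nlinarith
  have h2 : A + s * r ≤ m := le_of_mul_le_mul_left h1 hlam0
  rw [hm]
  exact_mod_cast h2

lemma key_sep {H : Type*} [NormedAddCommGroup H] [InnerProductSpace ℝ H] [CompleteSpace H]
    (f : H → EReal) (hconv : EConvexOn f) (hbot : ∀ x, f x ≠ ⊥)
    (p q : H) (cp cq δp δq : ℝ) (hδp : 0 < δp) (hδq : 0 < δq)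
    (hbp : ∀ z ∈ Metric.ball p δp, f z ≤ (cp : EReal))
    (hbq : ∀ z ∈ Metric.ball q δq, f z ≤ (cq : EReal))
    (t₀ : ℝ) (ht0 : 0 < t₀) (ht1 : t₀ < 1)
    (a s : ℝ) (hfx : f (t₀ • p + (1 - t₀) • q) = (a : EReal))
    (hsub : ∀ r : ℝ, ((a + s * r : ℝ) : EReal) ≤ f ((t₀ • p + (1 - t₀) • q) + r • (p - q))) :
    ∃ u ∈ subdiff f (t₀ • p + (1 - t₀) • q), (inner ℝ u (p - q) : ℝ) = s := by
  set x₀ : H := t₀ • p + (1 - t₀) • q with hx₀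
  set w : H := p - q with hw
  set epi : Set (H × ℝ) := {e | f e.1 ≤ (e.2 : EReal)} with hepi
  set M : Set (H × ℝ) := Set.range (fun r : ℝ => (x₀ + r • w, a + s * r)) with hM
  -- epi is convex
  have hfin : ∀ z : H, ∀ α : ℝ, f z ≤ (α : EReal) → f z = ((f z).toReal : EReal) := by
    intro z α h
    exact (EReal.coe_toReal (ne_top_of_le_ne_top (EReal.coe_ne_top α) h) (hbot z)).symm
  have hepi_conv : Convex ℝ epi := by
    rintro ⟨z₁, α₁⟩ h₁ ⟨z₂, α₂⟩ h₂ t u ht hu htu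
    simp only [hepi, Set.mem_setOf_eq] at h₁ h₂ ⊢
    have hb₁ := hfin z₁ α₁ h₁
    have hb₂ := hfin z₂ α₂ h₂
    have hle₁ : (f z₁).toReal ≤ α₁ := by
      rw [hb₁] at h₁; exact_mod_cast h₁
    have hle₂ : (f z₂).toReal ≤ α₂ := by
      rw [hb₂] at h₂; exact_mod_cast h₂
    have hu' : u = 1 - t := by linarith
    subst hu'
    have := hconv z₁ z₂ t ht (by linarith)
    rw [hb₁, hb₂] at this
    calc f (t • z₁ + (1 - t) • z₂) ≤ (t : EReal) * ((f z₁).toReal : EReal)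
          + ((1 - t : ℝ) : EReal) * ((f z₂).toReal : EReal) := this
      _ = ((t * (f z₁).toReal + (1 - t) * (f z₂).toReal : ℝ) : EReal) := by
          rw [← EReal.coe_mul, ← EReal.coe_mul, ← EReal.coe_add]
      _ ≤ ((t * α₁ + (1 - t) * α₂ : ℝ) : EReal) := by
          apply EReal.coe_le_coe_iff.mpr
          have := mul_le_mul_of_nonneg_left hle₁ ht
          have := mul_le_mul_of_nonneg_left hle₂ (by linarith : (0:ℝ) ≤ 1 - t)
          linarith
  -- interior points above p and q
  have hsubp : Metric.ball p δp ×ˢ Set.Ioi cp ⊆ epi := by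
    rintro ⟨z, α⟩ ⟨hz, hα⟩
    exact le_trans (hbp z hz) (EReal.coe_le_coe_iff.mpr (le_of_lt hα))
  have hsubq : Metric.ball q δq ×ˢ Set.Ioi cq ⊆ epi := by
    rintro ⟨z, α⟩ ⟨hz, hα⟩
    exact le_trans (hbq z hz) (EReal.coe_le_coe_iff.mpr (le_of_lt hα))
  have hintp : ∀ z ∈ Metric.ball p δp, ∀ α ∈ Set.Ioi cp, (z, α) ∈ interior epi := by
    intro z hz α hα
    exact interior_maximal hsubp (Metric.isOpen_ball.prod isOpen_Ioi) ⟨hz, hα⟩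
  have hintq : ∀ z ∈ Metric.ball q δq, ∀ α ∈ Set.Ioi cq, (z, α) ∈ interior epi := by
    intro z hz α hα
    exact interior_maximal hsubq (Metric.isOpen_ball.prod isOpen_Ioi) ⟨hz, hα⟩
  -- M is convex
  have hM_conv : Convex ℝ M := by
    rintro _ ⟨r₁, rfl⟩ _ ⟨r₂, rfl⟩ t u ht hu htu
    have hu' : u = 1 - t := by linarith
    subst hu'
    refine ⟨t * r₁ + (1 - t) * r₂, ?_⟩
    have h1 : x₀ + (t * r₁ + (1 - t) * r₂) • w
        = t • (x₀ + r₁ • w) + (1 - t) • (x₀ + r₂ • w) := by module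
    have h2 : a + s * (t * r₁ + (1 - t) * r₂)
        = t * (a + s * r₁) + (1 - t) * (a + s * r₂) := by ring
    simp only [Prod.smul_mk, Prod.mk_add_mk, smul_eq_mul]
    rw [h1, h2]
  -- disjointness
  have hdisj : Disjoint (interior epi) M := by
    rw [Set.disjoint_left]
    rintro e he ⟨r, rfl⟩
    obtain ⟨ε, hε, hball⟩ := Metric.isOpen_iff.mp isOpen_interior _ he
    have hmem : ((x₀ + r • w, a + s * r - ε / 2) : H × ℝ) ∈ Metric.ball (x₀ + r • w, a + s * r) ε := by
      rw [Metric.mem_ball, Prod.dist_eq]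
      simp only [dist_self, Real.dist_eq]
      rw [max_lt_iff]
      refine And.intro hε ?_
      rw [abs_of_nonpos (by linarith)]
      linarith
    have : ((x₀ + r • w, a + s * r - ε / 2) : H × ℝ) ∈ epi := interior_subset (hball hmem)
    simp only [hepi, Set.mem_setOf_eq] at this
    have h2 := le_trans (hsub r) this
    rw [EReal.coe_le_coe_iff] at h2
    linarith
  -- separation
  obtain ⟨L, c₀, hL1, hL2⟩ := geometric_hahn_banach_open hepi_conv.interior isOpen_interior
    hM_conv hdisj
  set β : ℝ := L ((0 : H), (1 : ℝ)) with hβdef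
  have hLsplit : ∀ (z : H) (α : ℝ), L (z, α) = L (z, 0) + α * β := by
    intro z α
    have : ((z, α) : H × ℝ) = (z, (0 : ℝ)) + α • ((0 : H), (1 : ℝ)) := by
      simp [Prod.smul_mk]
    rw [this, map_add, _root_.map_smul, smul_eq_mul]
  have hLadd : ∀ (z₁ z₂ : H), L ((z₁ + z₂ : H), (0 : ℝ)) = L (z₁, 0) + L (z₂, 0) := by
    intro z₁ z₂
    have : ((z₁ + z₂, (0 : ℝ)) : H × ℝ) = (z₁, (0 : ℝ)) + (z₂, (0 : ℝ)) := by simp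
    rw [this, map_add]
  have hLsmul : ∀ (c : ℝ) (z : H), L ((c • z : H), (0 : ℝ)) = c * L (z, 0) := by
    intro c z
    have : ((c • z, (0 : ℝ)) : H × ℝ) = c • (z, (0 : ℝ)) := by simp [Prod.smul_mk]
    rw [this, _root_.map_smul, smul_eq_mul]
  -- the M point at r = 0
  have hM0 : ∀ r : ℝ, c₀ ≤ L (x₀, 0) + r * L (w, 0) + (a + s * r) * β := by
    intro r
    have := hL2 _ ⟨r, rfl⟩
    rw [hLsplit] at this
    have hx : L ((x₀ + r • w : H), (0 : ℝ)) = L (x₀, 0) + r * L (w, 0) := by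
      rw [hLadd, hLsmul]
    linarith [this, hx.symm.le]
  -- β ≤ 0
  have hβnonpos : β ≤ 0 := by
    by_contra hpos
    push_neg at hpos
    set n : ℝ := max 0 ((c₀ - L (p, 0) - (cp + 1) * β) / β) with hn
    have hn0 : 0 ≤ n := le_max_left _ _
    have hn1 : (c₀ - L (p, 0) - (cp + 1) * β) / β ≤ n := le_max_right _ _
    have hmem := hintp p (Metric.mem_ball_self hδp) (cp + 1 + n) (by simp only [Set.mem_Ioi]; linarith)
    have := hL1 _ hmem
    rw [hLsplit] at this
    rw [div_le_iff₀ hpos] at hn1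
    nlinarith
  -- β ≠ 0
  have hβne : β ≠ 0 := by
    intro h0
    have hp' := hL1 _ (hintp p (Metric.mem_ball_self hδp) (cp + 1) (by simp))
    have hq' := hL1 _ (hintq q (Metric.mem_ball_self hδq) (cq + 1) (by simp))
    rw [hLsplit, h0] at hp' hq'
    have hx0 : L (x₀, 0) = t₀ * L (p, 0) + (1 - t₀) * L (q, 0) := by
      have : ((x₀, (0 : ℝ)) : H × ℝ) = t₀ • ((p, (0:ℝ)) : H × ℝ) + (1 - t₀) • ((q, (0:ℝ)) : H × ℝ) := by
        simp [hx₀, Prod.smul_mk]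
      rw [this, map_add, _root_.map_smul, _root_.map_smul, smul_eq_mul, smul_eq_mul]
    have h00 := hM0 0
    rw [h0] at h00
    nlinarith
  have hβ : β < 0 := lt_of_le_of_ne hβnonpos hβne
  -- slope identity : L (w,0) + s * β = 0
  have hslope : L (w, 0) + s * β = 0 := by
    by_contra hm
    set r : ℝ := (c₀ - L (x₀, 0) - a * β - 1) / (L (w, 0) + s * β) with hr
    have h := hM0 r
    have hid : r * (L (w, 0) + s * β) = c₀ - L (x₀, 0) - a * β - 1 :=
      div_mul_cancel₀ _ hm
    nlinarith [h, hid]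
  -- every point of epi satisfies L ≤ c₀
  have hy₀ : ((p, cp + 1) : H × ℝ) ∈ interior epi :=
    hintp p (Metric.mem_ball_self hδp) (cp + 1) (by simp)
  have hcl : ∀ e ∈ epi, L e ≤ c₀ := by
    intro e he
    have hcombo : ∀ lam : ℝ, lam ∈ Set.Ioo (0:ℝ) 1 →
        (1 - lam) * L (p, cp + 1) + lam * L e ≤ c₀ := by
      intro lam hlam
      have hmem := hepi_conv.combo_interior_closure_mem_interior hy₀
        (subset_closure he) (by linarith [hlam.2] : (0:ℝ) < 1 - lam) hlam.1.le (by ring)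
      have := hL1 _ hmem
      rw [map_add, _root_.map_smul, _root_.map_smul, smul_eq_mul, smul_eq_mul] at this
      linarith
    have htend : Tendsto (fun lam : ℝ => (1 - lam) * L (p, cp + 1) + lam * L e)
        (nhdsWithin (1:ℝ) (Set.Iio 1)) (nhds (L e)) := by
      have hc : Continuous (fun lam : ℝ => (1 - lam) * L (p, cp + 1) + lam * L e) :=
        (((continuous_const.sub continuous_id).mul continuous_const).add
          (continuous_id.mul continuous_const))
      have := (hc.tendsto 1).mono_left
        (nhdsWithin_le_nhds : nhdsWithin (1:ℝ) (Set.Iio 1) ≤ nhds 1)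
      simpa using this
    refine le_of_tendsto htend ?_
    filter_upwards [Ioo_mem_nhdsLT_of_mem
      (Set.mem_Ioc.mpr (And.intro zero_lt_one (le_refl (1:ℝ))))]
      with lam hlam using hcombo lam hlam
  -- construct u
  set l : H →L[ℝ] ℝ := L.comp (ContinuousLinearMap.inl ℝ H ℝ) with hl
  set u : H := (-β)⁻¹ • ((InnerProductSpace.toDual ℝ H).symm l) with hu
  have hinner : ∀ d : H, (inner ℝ u d : ℝ) = (-β)⁻¹ * L (d, 0) := by
    intro d
    rw [hu, real_inner_smul_left]
    congr 1
    exact InnerProductSpace.toDual_symm_apply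
  have hβpos : 0 < -β := by linarith
  have huw : (inner ℝ u w : ℝ) = s := by
    rw [hinner]
    have hLw : L (w, 0) = -s * β := by linarith
    rw [hLw]
    field_simp
  refine ⟨u, ?_, huw⟩
  intro z
  rcases eq_or_ne (f z) ⊤ with hz | hz
  · rw [hz]; exact le_top
  · have hzb : f z = ((f z).toReal : EReal) := (EReal.coe_toReal hz (hbot z)).symm
    set b : ℝ := (f z).toReal with hb
    have hmain : (inner ℝ u (z - x₀) : ℝ) ≤ b - a := by
      refine le_of_forall_pos_le_add ?_
      intro ε hε
      have hepis : ((z, b + ε) : H × ℝ) ∈ epi := by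
        simp only [hepi, Set.mem_setOf_eq]
        rw [hzb]
        exact_mod_cast (by linarith : b ≤ b + ε)
      have h1 : L (z, b + ε) ≤ c₀ := hcl _ hepis
      have h2 := hM0 0
      simp only [mul_zero, zero_mul, add_zero] at h2
      rw [hLsplit] at h1
      have hzx : L ((z - x₀ : H), (0:ℝ)) = L (z, 0) - L (x₀, 0) := by
        have hzx0 : ((z - x₀, (0:ℝ)) : H × ℝ) = (z, (0:ℝ)) - (x₀, (0:ℝ)) := by simp
        rw [hzx0, map_sub]
      rw [hinner, hzx]
      rw [inv_mul_le_iff₀ hβpos]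
      nlinarith
    rw [hfx, hzb, ← EReal.coe_add]
    exact_mod_cast (by linarith : a + (inner ℝ u (z - x₀) : ℝ) ≤ b)

lemma line_conv {H : Type*} [NormedAddCommGroup H] [InnerProductSpace ℝ H]
    (f : H → EReal) (hconv : EConvexOn f) (x₀ d : H) :
    ∀ r₁ r₂ lam : ℝ, 0 ≤ lam → lam ≤ 1 →
      f (x₀ + (lam * r₁ + (1 - lam) * r₂) • d) ≤
        (lam : EReal) * f (x₀ + r₁ • d) + ((1 - lam : ℝ) : EReal) * f (x₀ + r₂ • d) := by
  intro r₁ r₂ lam h0 h1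
  have harg : x₀ + (lam * r₁ + (1 - lam) * r₂) • d
      = lam • (x₀ + r₁ • d) + (1 - lam) • (x₀ + r₂ • d) := by module
  rw [harg]
  exact hconv _ _ lam h0 h1

lemma seg_fin {H : Type*} [NormedAddCommGroup H] [InnerProductSpace ℝ H]
    (f : H → EReal) (hconv : EConvexOn f) (hbot : ∀ x, f x ≠ ⊥)
    (p q : H) (hfp : f p ≠ ⊤) (hfq : f q ≠ ⊤) :
    ∀ t ∈ Set.Icc (0:ℝ) 1,
      f (t • p + (1 - t) • q) = (((f (t • p + (1 - t) • q)).toReal : ℝ) : EReal) := by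
  intro t ht
  have h := hconv p q t ht.1 ht.2
  have hp' : f p = (((f p).toReal : ℝ) : EReal) := (EReal.coe_toReal hfp (hbot p)).symm
  have hq' : f q = (((f q).toReal : ℝ) : EReal) := (EReal.coe_toReal hfq (hbot q)).symm
  rw [hp', hq', ← EReal.coe_mul, ← EReal.coe_mul, ← EReal.coe_add] at h
  exact (EReal.coe_toReal (ne_top_of_le_ne_top (EReal.coe_ne_top _) h)
    (hbot _)).symm

lemma seg_convexOn {H : Type*} [NormedAddCommGroup H] [InnerProductSpace ℝ H]
    (f : H → EReal) (hconv : EConvexOn f) (hbot : ∀ x, f x ≠ ⊥)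
    (p q : H) (hfp : f p ≠ ⊤) (hfq : f q ≠ ⊤) :
    ConvexOn ℝ (Set.Icc (0:ℝ) 1) (fun t => (f (t • p + (1 - t) • q)).toReal) := by
  refine ⟨convex_Icc 0 1, ?_⟩
  intro x hx y hy lam mu hlam hmu hsum
  have hmu' : mu = 1 - lam := by linarith
  subst hmu'
  have hcomb : lam • x + (1 - lam) • y ∈ Set.Icc (0:ℝ) 1 :=
    (convex_Icc 0 1) hx hy hlam hmu hsum
  have harg : (lam • x + (1 - lam) • y) • p + (1 - (lam • x + (1 - lam) • y)) • q
      = lam • (x • p + (1 - x) • q) + (1 - lam) • (y • p + (1 - y) • q) := by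
    simp only [smul_eq_mul]
    module
  have h := hconv (x • p + (1 - x) • q) (y • p + (1 - y) • q) lam hlam (by linarith)
  rw [← harg] at h
  rw [seg_fin f hconv hbot p q hfp hfq x hx, seg_fin f hconv hbot p q hfp hfq y hy] at h
  have hc := seg_fin f hconv hbot p q hfp hfq _ hcomb
  rw [hc, ← EReal.coe_mul, ← EReal.coe_mul, ← EReal.coe_add] at h
  rw [EReal.coe_le_coe_iff] at h
  simpa using h

lemma bdd_near {H : Type*} [NormedAddCommGroup H] [InnerProductSpace ℝ H]
    (f : H → EReal) (p : H) (hfp : f p ≠ ⊤) (hbot : f p ≠ ⊥) (hc : ContinuousAt f p) :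
    ∃ δ : ℝ, 0 < δ ∧ ∃ c : ℝ, ∀ z ∈ Metric.ball p δ, f z ≤ (c : EReal) := by
  have hrep : f p = (((f p).toReal : ℝ) : EReal) := (EReal.coe_toReal hfp hbot).symm
  have hIio : Set.Iio ((((f p).toReal + 1 : ℝ)) : EReal) ∈ nhds (f p) := by
    apply isOpen_Iio.mem_nhds
    rw [Set.mem_Iio]
    conv_lhs => rw [hrep]
    exact_mod_cast lt_add_one ((f p).toReal)
  have hnb := hc hIio
  obtain ⟨δ, hδ, hball⟩ := Metric.mem_nhds_iff.mp hnb
  exact ⟨δ, hδ, (f p).toReal + 1, fun z hz => le_of_lt (hball hz)⟩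

lemma min_case {H : Type*} [NormedAddCommGroup H] [InnerProductSpace ℝ H] [CompleteSpace H]
    (f g : H → EReal) (hfc : EConvexOn f) (hgc : EConvexOn g)
    (hfbot : ∀ x, f x ≠ ⊥) (hgbot : ∀ x, g x ≠ ⊥)
    (p q : H)
    (hfp : f p ≠ ⊤) (hfq : f q ≠ ⊤) (hgp : g p ≠ ⊤) (hgq : g q ≠ ⊤)
    (hfpc : ContinuousAt f p) (hfqc : ContinuousAt f q)
    (hgpc : ContinuousAt g p) (hgqc : ContinuousAt g q)
    (t₀ : ℝ) (ht0 : 0 < t₀) (ht1 : t₀ < 1)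
    (hmin : ∀ t ∈ Set.Icc (0:ℝ) 1,
      (f (t₀ • p + (1 - t₀) • q)).toReal - (g (t₀ • p + (1 - t₀) • q)).toReal ≤
      (f (t • p + (1 - t) • q)).toReal - (g (t • p + (1 - t) • q)).toReal) :
    ∃ u ∈ subdiff f (t₀ • p + (1 - t₀) • q),
      ∃ v ∈ subdiff g (t₀ • p + (1 - t₀) • q),
        (inner ℝ (u - v) (p - q) : ℝ) = 0 := by
  set φr : ℝ → ℝ := fun t => (f (t • p + (1 - t) • q)).toReal with hφr
  set ψr : ℝ → ℝ := fun t => (g (t • p + (1 - t) • q)).toReal with hψr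
  have ht₀mem : t₀ ∈ Set.Icc (0:ℝ) 1 := ⟨ht0.le, ht1.le⟩
  have hffin := seg_fin f hfc hfbot p q hfp hfq
  have hgfin := seg_fin g hgc hgbot p q hgp hgq
  have hψconv := seg_convexOn g hgc hgbot p q hgp hgq
  -- the shared slope s
  set S : Set ℝ := (fun t => (ψr t₀ - ψr t) / (t₀ - t)) '' (Set.Ico 0 t₀) with hS
  have hSne : S.Nonempty := ⟨_, ⟨0, ⟨le_refl 0, ht0⟩, rfl⟩⟩
  have hSbdd : BddAbove S := by
    refine ⟨(ψr 1 - ψr t₀) / (1 - t₀), ?_⟩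
    rintro _ ⟨t, ⟨ht0', htt₀⟩, rfl⟩
    have := hψconv.slope_mono_adjacent (x := t) (y := t₀) (z := 1)
      ⟨ht0', le_trans htt₀.le ht1.le⟩ ⟨zero_le_one, le_refl 1⟩ htt₀ ht1
    have hrw : (ψr t₀ - ψr t) / (t₀ - t) = (ψr t₀ - ψr t) / (t₀ - t) := rfl
    convert this using 2 <;> ring
  set s : ℝ := sSup S with hs
  have hψsub : ∀ t ∈ Set.Icc (0:ℝ) 1, ψr t₀ + s * (t - t₀) ≤ ψr t := by
    intro t ht
    rcases lt_trichotomy t t₀ with hlt | heq | hgt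
    · have hle : (ψr t₀ - ψr t) / (t₀ - t) ≤ s :=
        le_csSup hSbdd ⟨t, ⟨ht.1, hlt⟩, rfl⟩
      rw [div_le_iff₀ (by linarith)] at hle
      nlinarith
    · rw [heq]; simp
    · have hle : s ≤ (ψr t - ψr t₀) / (t - t₀) := by
        apply csSup_le hSne
        rintro _ ⟨t', ⟨ht0', htt₀⟩, rfl⟩
        have := hψconv.slope_mono_adjacent (x := t') (y := t₀) (z := t)
          ⟨ht0', by linarith [ht.2]⟩ ht htt₀ hgt
        convert this using 2 <;> ring
      rw [le_div_iff₀ (by linarith)] at hle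
      linarith
  have hφsub : ∀ t ∈ Set.Icc (0:ℝ) 1, φr t₀ + s * (t - t₀) ≤ φr t := by
    intro t ht
    have h1 := hmin t ht
    have h2 := hψsub t ht
    simp only [hφr, hψr] at h1 h2 ⊢
    linarith
  -- global subgradient inequalities along the line
  have key_sub : ∀ (F : H → EReal), EConvexOn F → (∀ x, F x ≠ ⊥) → F p ≠ ⊤ → F q ≠ ⊤ →
      (∀ t ∈ Set.Icc (0:ℝ) 1,
        (F (t₀ • p + (1 - t₀) • q)).toReal + s * (t - t₀) ≤ (F (t • p + (1 - t) • q)).toReal) →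
      ∀ r : ℝ, (((F (t₀ • p + (1 - t₀) • q)).toReal + s * r : ℝ) : EReal)
        ≤ F ((t₀ • p + (1 - t₀) • q) + r • (p - q)) := by
    intro F hFc hFbot hFp hFq hFsub r
    set x₀ : H := t₀ • p + (1 - t₀) • q with hx₀
    set A : ℝ := (F x₀).toReal with hA
    have hFfin := seg_fin F hFc hFbot p q hFp hFq
    have hF0 : F (x₀ + (0:ℝ) • (p - q)) = (A : EReal) := by
      rw [zero_smul, add_zero]
      exact hFfin t₀ ht₀mem
    rcases le_or_gt (1 - t₀) r with h1 | h1
    · -- right ray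
      have he : x₀ + (1 - t₀) • (p - q) = (1:ℝ) • p + (1 - (1:ℝ)) • q := by
        rw [hx₀]; module
      have hB := hFfin 1 ⟨zero_le_one, le_refl 1⟩
      have hAB : A + s * (1 - t₀) ≤ (F ((1:ℝ) • p + (1 - (1:ℝ)) • q)).toReal := by
        have := hFsub 1 ⟨zero_le_one, le_refl 1⟩
        linarith
      exact ereal_ray (fun x => F (x₀ + x • (p - q)))
        (line_conv F hFc x₀ (p - q)) (fun x => hFbot _)
        A ((F ((1:ℝ) • p + (1 - (1:ℝ)) • q)).toReal) s (1 - t₀) (by linarith)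
        hF0 (by show F (x₀ + (1 - t₀) • (p - q)) = _; rw [he]; exact hB) hAB r h1
    rcases le_or_gt r (-t₀) with h2 | h2
    · -- left ray
      have he : x₀ + t₀ • (q - p) = (0:ℝ) • p + (1 - (0:ℝ)) • q := by
        rw [hx₀]; module
      have hB := hFfin 0 ⟨le_refl 0, zero_le_one⟩
      have hAB : A + (-s) * t₀ ≤ (F ((0:ℝ) • p + (1 - (0:ℝ)) • q)).toReal := by
        have := hFsub 0 ⟨le_refl 0, zero_le_one⟩
        linarith
      have h0' : F (x₀ + (0:ℝ) • (q - p)) = (A : EReal) := by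
        rw [zero_smul, add_zero]
        exact hFfin t₀ ht₀mem
      have hres := ereal_ray (fun x => F (x₀ + x • (q - p)))
        (line_conv F hFc x₀ (q - p)) (fun x => hFbot _)
        A ((F ((0:ℝ) • p + (1 - (0:ℝ)) • q)).toReal) (-s) t₀ ht0
        h0' (by show F (x₀ + t₀ • (q - p)) = _; rw [he]; exact hB) hAB (-r) (by linarith)
      have harg : x₀ + (-r) • (q - p) = x₀ + r • (p - q) := by module
      beta_reduce at hres
      rw [harg] at hres
      have hco : ((A + -s * -r : ℝ) : EReal) = ((A + s * r : ℝ) : EReal) := by norm_num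
      rw [hco] at hres
      exact hres
    · -- middle
      have hmem : t₀ + r ∈ Set.Icc (0:ℝ) 1 := ⟨by linarith, by linarith⟩
      have harg : (t₀ + r) • p + (1 - (t₀ + r)) • q = x₀ + r • (p - q) := by
        rw [hx₀]; module
      have hfin := hFfin (t₀ + r) hmem
      rw [harg] at hfin
      rw [hfin]
      apply EReal.coe_le_coe_iff.mpr
      have := hFsub (t₀ + r) hmem
      rw [harg] at this
      linarith
  have hsubf := key_sub f hfc hfbot hfp hfq hφsub
  have hsubg := key_sub g hgc hgbot hgp hgq hψsub
  -- bounded above near p, q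
  obtain ⟨δfp, hδfp, cfp, hcfp⟩ := bdd_near f p hfp (hfbot p) hfpc
  obtain ⟨δfq, hδfq, cfq, hcfq⟩ := bdd_near f q hfq (hfbot q) hfqc
  obtain ⟨δgp, hδgp, cgp, hcgp⟩ := bdd_near g p hgp (hgbot p) hgpc
  obtain ⟨δgq, hδgq, cgq, hcgq⟩ := bdd_near g q hgq (hgbot q) hgqc
  obtain ⟨u, hu, hus⟩ := key_sep f hfc hfbot p q cfp cfq δfp δfq hδfp hδfq hcfp hcfq
    t₀ ht0 ht1 _ s (hffin t₀ ht₀mem) hsubf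
  obtain ⟨v, hv, hvs⟩ := key_sep g hgc hgbot p q cgp cgq δgp δgq hδgp hδgq hcgp hcgq
    t₀ ht0 ht1 _ s (hgfin t₀ ht₀mem) hsubg
  exact ⟨u, hu, v, hv, by rw [inner_sub_left, hus, hvs]; ring⟩

lemma cwa_seg {H : Type*} [NormedAddCommGroup H] [InnerProductSpace ℝ H]
    (f : H → EReal) (hbot : ∀ x, f x ≠ ⊥) (p q : H) (t₁ : ℝ)
    (hfy : f (t₁ • p + (1 - t₁) • q) ≠ ⊤)
    (hc : ContinuousAt f (t₁ • p + (1 - t₁) • q))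
    (hfin : ∀ t ∈ Set.Icc (0:ℝ) 1,
      f (t • p + (1 - t) • q) = (((f (t • p + (1 - t) • q)).toReal : ℝ) : EReal)) :
    ContinuousWithinAt (fun t => (f (t • p + (1 - t) • q)).toReal) (Set.Icc (0:ℝ) 1) t₁ := by
  have hγ : Continuous (fun t : ℝ => t • p + (1 - t) • q) := by
    apply Continuous.add
    · exact (continuous_id.smul continuous_const)
    · exact ((continuous_const.sub continuous_id).smul continuous_const)
  have h1 : ContinuousAt (fun t => f (t • p + (1 - t) • q)) t₁ :=
    ContinuousAt.comp hc hγ.continuousAt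
  have h2 : Tendsto (fun t => f (t • p + (1 - t) • q)) (nhdsWithin t₁ (Set.Icc 0 1))
      (nhds ((((f (t₁ • p + (1 - t₁) • q)).toReal : ℝ) : EReal))) := by
    have h1' : Tendsto (fun t => f (t • p + (1 - t) • q)) (nhds t₁)
        (nhds (f (t₁ • p + (1 - t₁) • q))) := h1
    rw [← EReal.coe_toReal hfy (hbot _)] at h1'
    exact h1'.mono_left nhdsWithin_le_nhds
  have h3 : Tendsto (fun t => (((f (t • p + (1 - t) • q)).toReal : ℝ) : EReal))
      (nhdsWithin t₁ (Set.Icc 0 1))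
      (nhds ((((f (t₁ • p + (1 - t₁) • q)).toReal : ℝ) : EReal))) := by
    refine h2.congr' ?_
    exact Filter.eventuallyEq_of_mem self_mem_nhdsWithin (fun t ht => hfin t ht)
  exact EReal.tendsto_coe.mp h3


theorem mean_value_convex_hilbert
    {H : Type*} [NormedAddCommGroup H] [InnerProductSpace ℝ H]
    [CompleteSpace H] [SecondCountableTopology H]
    (f g : H → EReal) (hf : ProperLscConvex f) (hg : ProperLscConvex g)
    (p q : H)
    (hfp : f p ≠ ⊤) (hfq : f q ≠ ⊤) (hgp : g p ≠ ⊤) (hgq : g q ≠ ⊤)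
    (hfpc : ContinuousAt f p) (hfqc : ContinuousAt f q)
    (hgpc : ContinuousAt g p) (hgqc : ContinuousAt g q)
    (heq : f p + g q = g p + f q) :
    ∃ t : ℝ, 0 < t ∧ t < 1 ∧
      ∃ u ∈ subdiff f (t • p + (1 - t) • q),
        ∃ v ∈ subdiff g (t • p + (1 - t) • q),
          (inner ℝ (u - v) (p - q) : ℝ) = 0 := by
  obtain ⟨-, hfbot, -, hfc⟩ := hf
  obtain ⟨-, hgbot, -, hgc⟩ := hg
  set φr : ℝ → ℝ := fun t => (f (t • p + (1 - t) • q)).toReal with hφr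
  set ψr : ℝ → ℝ := fun t => (g (t • p + (1 - t) • q)).toReal with hψr
  have hffin := seg_fin f hfc hfbot p q hfp hfq
  have hgfin := seg_fin g hgc hgbot p q hgp hgq
  have hp1 : (1:ℝ) • p + (1 - (1:ℝ)) • q = p := by module
  have hq0 : (0:ℝ) • p + (1 - (0:ℝ)) • q = q := by module
  -- continuity of φr, ψr on [0,1]
  have hcontOn : ∀ (F : H → EReal), EConvexOn F → (∀ x, F x ≠ ⊥) → F p ≠ ⊤ → F q ≠ ⊤ →
      ContinuousAt F p → ContinuousAt F q →
      ContinuousOn (fun t => (F (t • p + (1 - t) • q)).toReal) (Set.Icc (0:ℝ) 1) := by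
    intro F hFc hFbot hFp hFq hFpc hFqc
    have hIoo : ContinuousOn (fun t => (F (t • p + (1 - t) • q)).toReal) (Set.Ioo (0:ℝ) 1) :=
      ((seg_convexOn F hFc hFbot p q hFp hFq).subset Set.Ioo_subset_Icc_self
        (convex_Ioo 0 1)).continuousOn isOpen_Ioo
    intro t ht
    rcases eq_or_ne t 0 with rfl | ht0
    · exact cwa_seg F hFbot p q 0 (by rw [hq0]; exact hFq) (by rw [hq0]; exact hFqc)
        (seg_fin F hFc hFbot p q hFp hFq)
    rcases eq_or_ne t 1 with rfl | ht1
    · exact cwa_seg F hFbot p q 1 (by rw [hp1]; exact hFp) (by rw [hp1]; exact hFpc)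
        (seg_fin F hFc hFbot p q hFp hFq)
    have htIoo : t ∈ Set.Ioo (0:ℝ) 1 :=
      ⟨lt_of_le_of_ne ht.1 (Ne.symm ht0), lt_of_le_of_ne ht.2 ht1⟩
    exact ((hIoo.continuousAt (Ioo_mem_nhds htIoo.1 htIoo.2)).continuousWithinAt)
  have hφcont := hcontOn f hfc hfbot hfp hfq hfpc hfqc
  have hψcont := hcontOn g hgc hgbot hgp hgq hgpc hgqc
  set h : ℝ → ℝ := fun t => φr t - ψr t with hh
  have hcont : ContinuousOn h (Set.Icc (0:ℝ) 1) := hφcont.sub hψcont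
  -- h 0 = h 1
  have h01 : h 1 = h 0 := by
    have e1 : f p = (((f p).toReal : ℝ) : EReal) := (EReal.coe_toReal hfp (hfbot p)).symm
    have e2 : f q = (((f q).toReal : ℝ) : EReal) := (EReal.coe_toReal hfq (hfbot q)).symm
    have e3 : g p = (((g p).toReal : ℝ) : EReal) := (EReal.coe_toReal hgp (hgbot p)).symm
    have e4 : g q = (((g q).toReal : ℝ) : EReal) := (EReal.coe_toReal hgq (hgbot q)).symm
    rw [e1, e2, e3, e4, ← EReal.coe_add, ← EReal.coe_add, EReal.coe_eq_coe_iff] at heq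
    simp only [hh, hφr, hψr, hp1, hq0]
    linarith
  -- extremum
  obtain ⟨t₁, ht₁, hmin⟩ := isCompact_Icc.exists_isMinOn
    (Set.nonempty_Icc.mpr zero_le_one) hcont
  obtain ⟨t₂, ht₂, hmax⟩ := isCompact_Icc.exists_isMaxOn
    (Set.nonempty_Icc.mpr zero_le_one) hcont
  have hminle : ∀ t ∈ Set.Icc (0:ℝ) 1, h t₁ ≤ h t := fun t ht => hmin ht
  have hmaxle : ∀ t ∈ Set.Icc (0:ℝ) 1, h t ≤ h t₂ := fun t ht => hmax ht
  by_cases hc₁ : 0 < t₁ ∧ t₁ < 1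
  · exact ⟨t₁, hc₁.1, hc₁.2,
      min_case f g hfc hgc hfbot hgbot p q hfp hfq hgp hgq hfpc hfqc hgpc hgqc
        t₁ hc₁.1 hc₁.2 (fun t ht => by have := hminle t ht; simp only [hh, hφr, hψr] at this ⊢; linarith)⟩
  by_cases hc₂ : 0 < t₂ ∧ t₂ < 1
  · obtain ⟨u, hu, v, hv, hiuv⟩ :=
      min_case g f hgc hfc hgbot hfbot p q hgp hgq hfp hfq hgpc hgqc hfpc hfqc
        t₂ hc₂.1 hc₂.2 (fun t ht => by have := hmaxle t ht; simp only [hh, hφr, hψr] at this ⊢; linarith)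
    refine ⟨t₂, hc₂.1, hc₂.2, v, hv, u, hu, ?_⟩
    have : (inner ℝ (v - u) (p - q) : ℝ) = - (inner ℝ (u - v) (p - q) : ℝ) := by
      rw [← inner_neg_left, neg_sub]
    rw [this, hiuv, neg_zero]
  -- both extrema at endpoints : h is constant
  have hend : ∀ t' : ℝ, t' ∈ Set.Icc (0:ℝ) 1 → ¬(0 < t' ∧ t' < 1) → h t' = h 0 := by
    intro t' ht' hnot
    rcases eq_or_ne t' 0 with rfl | h0'
    · rfl
    rcases eq_or_ne t' 1 with rfl | h1'
    · exact h01
    exact absurd ⟨lt_of_le_of_ne ht'.1 (Ne.symm h0'), lt_of_le_of_ne ht'.2 h1'⟩ hnot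
  have ht₁0 : h t₁ = h 0 := hend t₁ ht₁ hc₁
  have ht₂0 : h t₂ = h 0 := hend t₂ ht₂ hc₂
  have hhalf : (1/2 : ℝ) ∈ Set.Icc (0:ℝ) 1 := by norm_num
  refine ⟨1/2, by norm_num, by norm_num,
    min_case f g hfc hgc hfbot hgbot p q hfp hfq hgp hgq hfpc hfqc hgpc hgqc
      (1/2) (by norm_num) (by norm_num) (fun t ht => ?_)⟩
  have h1 := hminle t ht
  have h2 := hmaxle (1/2) hhalf
  simp only [hh, hφr, hψr] at h1 h2 ht₁0 ht₂0 ⊢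
  linarith


end
end

section
/- Let H be a real separable Hilbert space and let f, g : H → (-∞,+∞] be proper lower semicontinuous convex functions. Suppose p ∈ H is a point at which both f and g are finite and continuous, both ∂f(p) and ∂g(p) are singletons {∇f(p)} and {∇g(p)}, and ∇f(p) ≠ ∇g(p) = 0 while f(p) = g(p) = 0. Define X := {x ∈ H : ∂g(x) is a singleton {∇g(x)} and there exists h ∈ H with f(h) > g(h) and ∇g(x) ∈ ∂f(h)}. Then there exists ε > 0 such that ‖x − p‖ ≥ ε for every x ∈ X. -/
open MeasureTheory Filter Topology

noncomputable section

/- helpers -/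
private lemma eNeBot {a : EReal} (h : 0 ≤ a) : a ≠ ⊥ := by
  intro hh; rw [hh] at h; simp at h

private lemma eNeTop {a : EReal} {B : ℝ} (h : a ≤ (B : EReal)) : a ≠ ⊤ := by
  intro hh; rw [hh] at h; exact EReal.coe_ne_top B (top_le_iff.1 h)

private lemma eToRealNonneg {a : EReal} (h : 0 ≤ a) : 0 ≤ a.toReal := by
  by_cases ht : a = ⊤
  · simp [ht]
  · have h2 : ((a.toReal : ℝ) : EReal) = a := EReal.coe_toReal ht (eNeBot h)
    rw [← h2] at h; exact_mod_cast h

private lemma eToRealLe {a : EReal} {B : ℝ} (h0 : 0 ≤ a) (h : a ≤ (B : EReal)) :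
    a.toReal ≤ B := by
  have := EReal.toReal_le_toReal h (eNeBot h0) (EReal.coe_ne_top B)
  simpa using this

private lemma le_of_eps {a b : ℝ} (h : ∀ ε : ℝ, 0 < ε → a ≤ b + ε) : a ≤ b := by
  by_contra hc
  push_neg at hc
  have := h ((a - b)/2) (by linarith)
  linarith

private lemma gnonneg {H : Type*} [NormedAddCommGroup H] [InnerProductSpace ℝ H]
    {g : H → EReal} {p : H} (hgp : (0 : H) ∈ subdiff g p) (hgp0 : g p = 0) :
    ∀ z, 0 ≤ g z := by
  intro z
  have h := hgp z
  simpa [hgp0] using h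

private lemma gball {H : Type*} [NormedAddCommGroup H] [InnerProductSpace ℝ H]
    {g : H → EReal} {p : H} (hgc : ContinuousAt g p) (hgp0 : g p = 0)
    {η : ℝ} (hη : 0 < η) :
    ∃ r : ℝ, 0 < r ∧ ∀ x : H, ‖x - p‖ < r → g x < (η : EReal) := by
  have h1 : Set.Iio (η : EReal) ∈ nhds (g p) := by
    rw [hgp0]
    exact Iio_mem_nhds (by exact_mod_cast hη)
  rcases Metric.mem_nhds_iff.1 (hgc.preimage_mem_nhds h1) with ⟨r, hr, hball⟩
  refine ⟨r, hr, fun x hx => ?_⟩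
  exact hball (by rwa [Metric.mem_ball, dist_eq_norm])

section NN

variable {H : Type*} [NormedAddCommGroup H] [InnerProductSpace ℝ H]
variable {g : H → EReal} {p : H} {r₁ : ℝ}

/-- convexity scaling along a segment from `p`. -/
private lemma scale_le (hconv : EConvexOn g) (hgp0 : g p = 0) (x : H) {t : ℝ}
    (ht0 : 0 < t) (ht1 : t ≤ 1) : g (p + t • (x - p)) ≤ (t : EReal) * g x := by
  have h := hconv x p t ht0.le ht1
  have hpt : t • x + (1 - t) • p = p + t • (x - p) := by module
  rw [hpt, hgp0, mul_zero, add_zero] at h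
  exact h

private def Tt (r₁ : ℝ) (u : H) : ℝ := r₁ / (‖u‖ + 1)

private lemma Tt_pos (hr₁ : 0 < r₁) (u : H) : 0 < Tt r₁ u :=
  div_pos hr₁ (by positivity)

private lemma mem_ball_Ioo (u : H) {t : ℝ} (ht : t ∈ Set.Ioo 0 (Tt r₁ u)) :
    ‖(p + t • u) - p‖ < r₁ := by
  rw [add_sub_cancel_left, norm_smul, Real.norm_eq_abs, abs_of_pos ht.1]
  have h2 : t * (‖u‖ + 1) < r₁ := (lt_div_iff₀ (by positivity)).1 ht.2
  nlinarith [norm_nonneg u, ht.1]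

private def phi (g : H → EReal) (p u : H) (t : ℝ) : ℝ := (g (p + t • u)).toReal / t

private def Nf (g : H → EReal) (p : H) (r₁ : ℝ) (u : H) : ℝ :=
  sInf (phi g p u '' Set.Ioo 0 (Tt r₁ u))

variable (hconv : EConvexOn g) (hgp0 : g p = 0) (hg0 : ∀ z, 0 ≤ g z) (hr₁ : 0 < r₁)
variable (hball : ∀ x : H, ‖x - p‖ < r₁ → g x < ((1 : ℝ) : EReal))

include hball in
private lemma g_lt_one (u : H) {t : ℝ} (ht : t ∈ Set.Ioo 0 (Tt r₁ u)) :
    g (p + t • u) < ((1 : ℝ) : EReal) := hball _ (mem_ball_Ioo u ht)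

include hball hg0 in
private lemma g_eq_coe (u : H) {t : ℝ} (ht : t ∈ Set.Ioo 0 (Tt r₁ u)) :
    g (p + t • u) = (((g (p + t • u)).toReal : ℝ) : EReal) :=
  (EReal.coe_toReal (eNeTop (le_of_lt (g_lt_one hball u ht))) (eNeBot (hg0 _))).symm

include hg0 in
private lemma phi_nonneg (u : H) {t : ℝ} (ht : 0 < t) : 0 ≤ phi g p u t :=
  div_nonneg (eToRealNonneg (hg0 _)) ht.le

include hr₁ in
private lemma S_nonempty (u : H) : (phi g p u '' Set.Ioo 0 (Tt r₁ u)).Nonempty :=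
  ⟨phi g p u (Tt r₁ u / 2), ⟨Tt r₁ u / 2,
    ⟨half_pos (Tt_pos hr₁ u), half_lt_self (Tt_pos hr₁ u)⟩, rfl⟩⟩

include hg0 in
private lemma S_bdd (u : H) : BddBelow (phi g p u '' Set.Ioo 0 (Tt r₁ u)) := by
  refine ⟨0, ?_⟩
  rintro b ⟨t, ht, rfl⟩
  exact phi_nonneg hg0 u ht.1

include hg0 hr₁ in
private lemma N_nonneg (u : H) : 0 ≤ Nf g p r₁ u :=
  le_csInf (S_nonempty hr₁ u) (by rintro b ⟨t, ht, rfl⟩; exact phi_nonneg hg0 u ht.1)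

include hg0 in
private lemma N_le_phi (u : H) {t : ℝ} (ht : t ∈ Set.Ioo 0 (Tt r₁ u)) :
    Nf g p r₁ u ≤ phi g p u t :=
  csInf_le (S_bdd hg0 u) ⟨t, ht, rfl⟩

include hconv hgp0 hg0 in
private lemma phi_mono (u : H) {s t : ℝ} (hs : 0 < s) (hst : s ≤ t)
    (htop : g (p + t • u) ≠ ⊤) : phi g p u s ≤ phi g p u t := by
  have ht0 : 0 < t := lt_of_lt_of_le hs hst
  have hr : 0 < s / t := div_pos hs ht0
  have hr1 : s / t ≤ 1 := (div_le_one ht0).2 hst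
  have h := scale_le hconv hgp0 (p + t • u) hr hr1
  have hpt : p + (s / t) • ((p + t • u) - p) = p + s • u := by
    rw [add_sub_cancel_left, smul_smul, div_mul_cancel₀ _ ht0.ne']
  rw [hpt] at h
  have hgt : g (p + t • u) = (((g (p + t • u)).toReal : ℝ) : EReal) :=
    (EReal.coe_toReal htop (eNeBot (hg0 _))).symm
  rw [hgt, ← EReal.coe_mul] at h
  have hsle : (g (p + s • u)).toReal ≤ (s / t) * (g (p + t • u)).toReal :=
    eToRealLe (hg0 _) h
  have hXt : 0 ≤ (g (p + t • u)).toReal := eToRealNonneg (hg0 _)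
  rw [phi, phi, div_le_div_iff₀ hs ht0]
  calc (g (p + s • u)).toReal * t ≤ ((s / t) * (g (p + t • u)).toReal) * t :=
        mul_le_mul_of_nonneg_right hsle ht0.le
    _ = (g (p + t • u)).toReal * s := by field_simp

include hconv hgp0 hg0 hr₁ hball in
private lemma N_approx (u : H) {δ : ℝ} (hδ : 0 < δ) (hδT : δ ≤ Tt r₁ u)
    {ε : ℝ} (hε : 0 < ε) :
    ∃ t : ℝ, t ∈ Set.Ioo 0 δ ∧ phi g p u t < Nf g p r₁ u + ε := by
  obtain ⟨b, hb, hblt⟩ := exists_lt_of_csInf_lt (S_nonempty hr₁ u)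
    (lt_add_of_pos_right (Nf g p r₁ u) hε)
  obtain ⟨t₀, ht₀, rfl⟩ := hb
  refine ⟨min t₀ (δ / 2), ⟨lt_min ht₀.1 (half_pos hδ),
    (min_le_right _ _).trans_lt (half_lt_self hδ)⟩, ?_⟩
  refine lt_of_le_of_lt ?_ hblt
  exact phi_mono hconv hgp0 hg0 u (lt_min ht₀.1 (half_pos hδ)) (min_le_left _ _)
    (eNeTop (le_of_lt (g_lt_one hball u ht₀)))

end NN

section NN2

variable {H : Type*} [NormedAddCommGroup H] [InnerProductSpace ℝ H]
variable {g : H → EReal} {p : H} {r₁ : ℝ}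
variable (hconv : EConvexOn g) (hgp0 : g p = 0) (hg0 : ∀ z, 0 ≤ g z) (hr₁ : 0 < r₁)
variable (hball : ∀ x : H, ‖x - p‖ < r₁ → g x < ((1 : ℝ) : EReal))

include hconv hgp0 hg0 hr₁ hball in
private lemma N_smul_le {c : ℝ} (hc : 0 < c) (u : H) :
    Nf g p r₁ (c • u) ≤ c * Nf g p r₁ u := by
  refine le_of_eps ?_
  intro ε hε
  obtain ⟨t, ht, hφt⟩ := N_approx hconv hgp0 hg0 hr₁ hball u
    (lt_min (Tt_pos hr₁ u) (mul_pos hc (Tt_pos hr₁ (c • u)))) (min_le_left _ _)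
    (div_pos hε hc)
  have htTu : t ∈ Set.Ioo 0 (Tt r₁ u) := ⟨ht.1, lt_of_lt_of_le ht.2 (min_le_left _ _)⟩
  have htc : t / c ∈ Set.Ioo 0 (Tt r₁ (c • u)) := by
    refine ⟨div_pos ht.1 hc, (div_lt_iff₀ hc).2 ?_⟩
    have := lt_of_lt_of_le ht.2 (min_le_right _ _)
    linarith [this, mul_comm c (Tt r₁ (c • u))]
  have hkey : phi g p (c • u) (t / c) = c * phi g p u t := by
    rw [phi, phi]
    have h1 : (t / c) • (c • u) = t • u := by
      rw [smul_smul, div_mul_cancel₀ _ hc.ne']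
    rw [h1, div_div_eq_mul_div]
    ring
  have h2 := (N_le_phi hg0 (c • u) htc).trans_eq hkey
  have h3 : c * phi g p u t ≤ c * (Nf g p r₁ u + ε / c) :=
    mul_le_mul_of_nonneg_left hφt.le hc.le
  have h4 : c * (Nf g p r₁ u + ε / c) = c * Nf g p r₁ u + ε := by
    field_simp
  linarith

include hconv hgp0 hg0 hr₁ hball in
private lemma N_smul {c : ℝ} (hc : 0 < c) (u : H) :
    Nf g p r₁ (c • u) = c * Nf g p r₁ u := by
  refine le_antisymm (N_smul_le hconv hgp0 hg0 hr₁ hball hc u) ?_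
  have h2 := N_smul_le hconv hgp0 hg0 hr₁ hball (inv_pos.2 hc) (c • u)
  rw [smul_smul, inv_mul_cancel₀ hc.ne', one_smul] at h2
  calc c * Nf g p r₁ u ≤ c * (c⁻¹ * Nf g p r₁ (c • u)) :=
        mul_le_mul_of_nonneg_left h2 hc.le
    _ = Nf g p r₁ (c • u) := by field_simp

include hconv hgp0 hg0 hr₁ hball in
private lemma N_add (u₁ u₂ : H) :
    Nf g p r₁ (u₁ + u₂) ≤ Nf g p r₁ u₁ + Nf g p r₁ u₂ := by
  refine le_of_eps ?_
  intro ε hε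
  obtain ⟨t₁, ht₁, hφ₁⟩ := N_approx hconv hgp0 hg0 hr₁ hball u₁ (Tt_pos hr₁ u₁)
    le_rfl (half_pos hε)
  obtain ⟨t₂, ht₂, hφ₂⟩ := N_approx hconv hgp0 hg0 hr₁ hball u₂ (Tt_pos hr₁ u₂)
    le_rfl (half_pos hε)
  set t : ℝ := min (min t₁ t₂ / 2) (Tt r₁ (u₁ + u₂) / 2) with htdef
  have htm : 0 < min t₁ t₂ := lt_min ht₁.1 ht₂.1
  have ht0 : 0 < t := lt_min (by positivity) (half_pos (Tt_pos hr₁ _))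
  have h2t₁ : 2 * t ≤ t₁ := by
    have := min_le_left (min t₁ t₂ / 2) (Tt r₁ (u₁ + u₂) / 2)
    have := min_le_left t₁ t₂
    simp only [htdef] at *
    linarith [min_le_left (min t₁ t₂ / 2) (Tt r₁ (u₁ + u₂) / 2), min_le_left t₁ t₂]
  have h2t₂ : 2 * t ≤ t₂ := by
    linarith [min_le_left (min t₁ t₂ / 2) (Tt r₁ (u₁ + u₂) / 2), min_le_right t₁ t₂]
  have hIoo : t ∈ Set.Ioo 0 (Tt r₁ (u₁ + u₂)) :=
    ⟨ht0, lt_of_le_of_lt (min_le_right _ _) (half_lt_self (Tt_pos hr₁ _))⟩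
  have h2tIoo₁ : 2 * t ∈ Set.Ioo 0 (Tt r₁ u₁) := ⟨by linarith, lt_of_le_of_lt h2t₁ ht₁.2⟩
  have h2tIoo₂ : 2 * t ∈ Set.Ioo 0 (Tt r₁ u₂) := ⟨by linarith, lt_of_le_of_lt h2t₂ ht₂.2⟩
  have hc2 := hconv (p + (2 * t) • u₁) (p + (2 * t) • u₂) (1/2) (by norm_num) (by norm_num)
  have hpt : (1/2 : ℝ) • (p + (2*t) • u₁) + (1 - 1/2 : ℝ) • (p + (2*t) • u₂)
      = p + t • (u₁ + u₂) := by
    have h12 : (1 - 1/2 : ℝ) = 1/2 := by norm_num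
    rw [h12]
    module
  rw [hpt] at hc2
  set X₁ : ℝ := (g (p + (2*t) • u₁)).toReal with hX₁
  set X₂ : ℝ := (g (p + (2*t) • u₂)).toReal with hX₂
  rw [g_eq_coe hg0 hball u₁ h2tIoo₁, g_eq_coe hg0 hball u₂ h2tIoo₂, ← hX₁, ← hX₂,
    ← EReal.coe_mul, ← EReal.coe_mul, ← EReal.coe_add] at hc2
  have hreal : (g (p + t • (u₁ + u₂))).toReal ≤ 1/2 * X₁ + (1 - 1/2) * X₂ :=
    eToRealLe (hg0 _) hc2
  have hphit : phi g p (u₁ + u₂) t ≤ phi g p u₁ (2*t) + phi g p u₂ (2*t) := by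
    rw [phi, phi, phi, div_le_iff₀ ht0]
    have heq : (X₁ / (2*t) + X₂ / (2*t)) * t = 1/2 * X₁ + (1 - 1/2) * X₂ := by
      field_simp
      ring
    rw [← hX₁, ← hX₂, heq]
    exact hreal
  have hm₁ : phi g p u₁ (2*t) ≤ phi g p u₁ t₁ :=
    phi_mono hconv hgp0 hg0 u₁ (by linarith) h2t₁
      (eNeTop (le_of_lt (g_lt_one hball u₁ ht₁)))
  have hm₂ : phi g p u₂ (2*t) ≤ phi g p u₂ t₂ :=
    phi_mono hconv hgp0 hg0 u₂ (by linarith) h2t₂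
      (eNeTop (le_of_lt (g_lt_one hball u₂ ht₂)))
  have := N_le_phi (p := p) hg0 (u₁ + u₂) hIoo
  linarith

include hconv hgp0 hg0 hr₁ hball in
private lemma N_le_g (z : H) : ((Nf g p r₁ (z - p) : ℝ) : EReal) ≤ g z := by
  by_cases htop : g z = ⊤
  · rw [htop]; exact le_top
  have hz0 := hg0 z
  set B : ℝ := (g z).toReal with hB
  have hzB : g z = (B : EReal) := (EReal.coe_toReal htop (eNeBot hz0)).symm
  set t : ℝ := min 1 (Tt r₁ (z - p)) / 2 with htdef
  have ht0 : 0 < t := by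
    have := Tt_pos hr₁ (z - p)
    simp only [htdef]
    positivity
  have ht1 : t ≤ 1 := by
    have := min_le_left 1 (Tt r₁ (z - p)); simp only [htdef]; linarith
  have htIoo : t ∈ Set.Ioo 0 (Tt r₁ (z - p)) := by
    refine ⟨ht0, ?_⟩
    have h1 := min_le_right 1 (Tt r₁ (z - p))
    have h2 := Tt_pos hr₁ (z - p)
    simp only [htdef]; linarith
  have h := scale_le hconv hgp0 z ht0 ht1
  rw [hzB, ← EReal.coe_mul] at h
  have h2 : (g (p + t • (z - p))).toReal ≤ t * B := eToRealLe (hg0 _) h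
  have h3 : phi g p (z - p) t ≤ B := by
    rw [phi, div_le_iff₀ ht0]
    linarith [mul_comm t B]
  rw [hzB]
  exact_mod_cast (N_le_phi hg0 (z - p) htIoo).trans h3

end NN2
private lemma dirderiv {H : Type*} [NormedAddCommGroup H] [InnerProductSpace ℝ H]
    [CompleteSpace H] {g : H → EReal} {p : H}
    (hconv : EConvexOn g) (hgp : subdiff g p = {(0 : H)}) (hgp0 : g p = 0)
    (hgc : ContinuousAt g p) (w : H) {a : ℝ} (ha : 0 < a) :
    ∃ t : ℝ, 0 < t ∧ g (p + t • w) < ((a * t : ℝ) : EReal) := by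
  have hg0 : ∀ z, 0 ≤ g z := gnonneg (by rw [hgp]; rfl) hgp0
  by_contra hcon
  push_neg at hcon
  have hcon' : ∀ t : ℝ, 0 < t → ((a * t : ℝ) : EReal) ≤ g (p + t • w) := fun t ht =>
    hcon t ht
  rcases eq_or_ne w 0 with hw | hw
  · have h1 := hcon' 1 one_pos
    rw [hw, smul_zero, add_zero, hgp0] at h1
    have : a * 1 ≤ (0 : ℝ) := by exact_mod_cast h1
    linarith
  obtain ⟨r₁, hr₁, hball⟩ := gball hgc hgp0 one_pos
  -- N w ≥ a
  have hNw : a ≤ Nf g p r₁ w := by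
    refine le_csInf (S_nonempty hr₁ w) ?_
    rintro b ⟨t, ht, rfl⟩
    have h := hcon' t ht.1
    rw [g_eq_coe hg0 hball w ht] at h
    have h2 : a * t ≤ (g (p + t • w)).toReal := by exact_mod_cast h
    rw [phi, le_div_iff₀ ht.1]
    linarith
  -- Hahn-Banach extension
  set pm : H →ₗ.[ℝ] ℝ := LinearPMap.mkSpanSingleton w (Nf g p r₁ w) hw with hpm
  have hpm_dom : ∀ x : pm.domain, pm x ≤ Nf g p r₁ x := by
    rintro ⟨v, hv⟩
    have hv' : v ∈ Submodule.span ℝ {w} := hv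
    obtain ⟨c, hc⟩ := Submodule.mem_span_singleton.1 hv'
    subst hc
    have happl : pm ⟨c • w, hv⟩ = c • Nf g p r₁ w :=
      LinearPMap.mkSpanSingleton'_apply w (Nf g p r₁ w) _ c hv
    rw [happl, smul_eq_mul]
    rcases lt_trichotomy c 0 with h | h | h
    · have h1 : c * Nf g p r₁ w ≤ 0 :=
        mul_nonpos_of_nonpos_of_nonneg h.le (N_nonneg hg0 hr₁ w)
      exact h1.trans (N_nonneg hg0 hr₁ (c • w))
    · subst h
      simp only [zero_mul, zero_smul]
      exact N_nonneg hg0 hr₁ (0 : H)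
    · rw [← N_smul hconv hgp0 hg0 hr₁ hball h w]
  obtain ⟨G, hGext, hGle⟩ := exists_extension_of_le_sublinear pm (Nf g p r₁)
    (fun c hc x => N_smul hconv hgp0 hg0 hr₁ hball hc x)
    (fun x y => N_add hconv hgp0 hg0 hr₁ hball x y) hpm_dom
  have hGw : G w = Nf g p r₁ w := by
    have h1 := hGext ⟨w, Submodule.mem_span_singleton_self w⟩
    have h2 : pm ⟨w, Submodule.mem_span_singleton_self w⟩ = Nf g p r₁ w :=
      LinearPMap.mkSpanSingleton'_apply_self _ _ _ _
    rw [h1, h2]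
  -- boundedness of G
  have hGbd : ∀ x : H, G x ≤ 2 / r₁ * (‖x‖ + 1) := by
    intro x
    refine (hGle x).trans ?_
    have hmem2 : Tt r₁ x / 2 ∈ Set.Ioo 0 (Tt r₁ x) :=
      ⟨half_pos (Tt_pos hr₁ x), half_lt_self (Tt_pos hr₁ x)⟩
    refine (N_le_phi (p := p) hg0 x hmem2).trans ?_
    have h1 : (g (p + (Tt r₁ x / 2) • x)).toReal ≤ 1 :=
      eToRealLe (hg0 _) (le_of_lt (g_lt_one hball x hmem2))
    have hTpos := Tt_pos hr₁ x
    have h2 : phi g p x (Tt r₁ x / 2) ≤ 1 / (Tt r₁ x / 2) := by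
      rw [phi]
      gcongr
    refine h2.trans (le_of_eq ?_)
    rw [Tt]
    have hn : (0:ℝ) < ‖x‖ + 1 := by positivity
    field_simp
  have hGnorm : ∃ C : ℝ, ∀ x : H, ‖G x‖ ≤ C * ‖x‖ := by
    refine ⟨4 / r₁, fun x => ?_⟩
    rcases eq_or_ne x 0 with rfl | hx
    · simp
    · have hnx : 0 < ‖x‖ := norm_pos_iff.2 hx
      have hunit : ∀ u : H, ‖u‖ = 1 → |G u| ≤ 4 / r₁ := by
        intro u hu
        have h1 := hGbd u
        have h2 := hGbd (-u)
        rw [map_neg, norm_neg, hu] at h2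
        rw [hu] at h1
        have h3 : 2 / r₁ * (1 + 1) = 4 / r₁ := by ring
        rw [abs_le]
        constructor <;> linarith
      have hx1 : ‖(‖x‖⁻¹ : ℝ) • x‖ = 1 := norm_smul_inv_norm (𝕜 := ℝ) hx
      have hG1 := hunit _ hx1
      have hGx : G ((‖x‖⁻¹ : ℝ) • x) = ‖x‖⁻¹ * G x := by
        rw [_root_.map_smul, smul_eq_mul]
      rw [hGx, abs_mul, abs_inv, abs_norm] at hG1
      rw [Real.norm_eq_abs]
      calc |G x| = ‖x‖ * (‖x‖⁻¹ * |G x|) := by field_simp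
        _ ≤ ‖x‖ * (4 / r₁) := mul_le_mul_of_nonneg_left hG1 hnx.le
        _ = 4 / r₁ * ‖x‖ := by ring
  set G' : H →L[ℝ] ℝ := LinearMap.mkContinuousOfExistsBound G hGnorm with hG'
  set y : H := (InnerProductSpace.toDual ℝ H).symm G' with hy
  have hyx : ∀ x : H, (inner ℝ y x : ℝ) = G x := by
    intro x
    rw [hy]
    rw [InnerProductSpace.toDual_symm_apply]
    rfl
  have hysub : y ∈ subdiff g p := by
    intro z
    rw [hgp0, zero_add, hyx]
    exact le_trans (EReal.coe_le_coe_iff.2 (hGle (z - p)))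
      (N_le_g hconv hgp0 hg0 hr₁ hball z)
  have hy0 : y = (0 : H) := by
    rw [hgp] at hysub
    exact hysub
  have hGw0 : G w = 0 := by
    rw [← hyx w, hy0, inner_zero_left]
  rw [hGw] at hGw0
  linarith
private lemma inner_small {H : Type*} [NormedAddCommGroup H] [InnerProductSpace ℝ H]
    [CompleteSpace H] {g : H → EReal} {p : H}
    (hconv : EConvexOn g) (hgp : subdiff g p = {(0 : H)}) (hgp0 : g p = 0)
    (hgc : ContinuousAt g p) (w : H) {η : ℝ} (hη : 0 < η) :
    ∃ δ : ℝ, 0 < δ ∧ ∀ x y : H, ‖x - p‖ < δ → y ∈ subdiff g x →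
      (inner ℝ y w : ℝ) < η := by
  have hg0 : ∀ z, 0 ≤ g z := gnonneg (by rw [hgp]; rfl) hgp0
  obtain ⟨r₁, hr₁, hball⟩ := gball hgc hgp0 one_pos
  obtain ⟨τ, hτ0, hτ⟩ := dirderiv hconv hgp hgp0 hgc w (a := η/8) (by positivity)
  set s : ℝ := min 2⁻¹ (η * τ / 8) with hsdef
  have hs0 : 0 < s := lt_min (by norm_num) (by positivity)
  have hshalf : s ≤ 2⁻¹ := min_le_left _ _
  have hs2 : s ≤ η * τ / 8 := min_le_right _ _
  set t : ℝ := (1 - s) * τ with htdef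
  have ht0 : 0 < t := mul_pos (by linarith [hshalf]) hτ0
  refine ⟨s * r₁, by positivity, ?_⟩
  intro x y hx hy
  set z : H := p + s⁻¹ • (x - p) with hzdef
  have hzball : ‖z - p‖ < r₁ := by
    rw [hzdef, add_sub_cancel_left, norm_smul, Real.norm_eq_abs, abs_inv,
      abs_of_pos hs0]
    rw [inv_mul_lt_iff₀ hs0]
    exact hx
  have hgz := hball z hzball
  set A : ℝ := (g (p + τ • w)).toReal with hAdef
  have hgτ : g (p + τ • w) = (A : EReal) :=
    (EReal.coe_toReal (eNeTop hτ.le) (eNeBot (hg0 _))).symm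
  have hA8 : A ≤ η / 8 * τ := eToRealLe (hg0 _) hτ.le
  have hA0 : 0 ≤ A := eToRealNonneg (hg0 _)
  set Bz : ℝ := (g z).toReal with hBzdef
  have hgzc : g z = (Bz : EReal) :=
    (EReal.coe_toReal (eNeTop hgz.le) (eNeBot (hg0 _))).symm
  have hBz1 : Bz ≤ 1 := eToRealLe (hg0 _) hgz.le
  have hBz0 : 0 ≤ Bz := eToRealNonneg (hg0 _)
  have hc := hconv (p + τ • w) z (1 - s) (by linarith) (by linarith)
  have hpt : (1 - s) • (p + τ • w) + (1 - (1 - s)) • z = x + t • w := by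
    have h1 : (1 - (1 - s)) = s := by ring
    rw [h1]
    have h2 : s • z = s • p + (x - p) := by
      rw [hzdef, smul_add, smul_smul, mul_inv_cancel₀ hs0.ne', one_smul]
    rw [h2, htdef]
    module
  rw [hpt, hgτ, hgzc, ← EReal.coe_mul, ← EReal.coe_mul, ← EReal.coe_add] at hc
  have hsub := hy (x + t • w)
  rw [add_sub_cancel_left] at hsub
  have hsub2 : ((inner ℝ y (t • w) : ℝ) : EReal)
      ≤ (((1 - s) * A + (1 - (1 - s)) * Bz : ℝ) : EReal) :=
    le_trans (le_trans (le_add_of_nonneg_left (hg0 x)) hsub) hc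
  have hinner : (inner ℝ y (t • w) : ℝ) ≤ (1 - s) * A + (1 - (1 - s)) * Bz := by
    exact_mod_cast hsub2
  rw [real_inner_smul_right] at hinner
  have h5 : t * (inner ℝ y w : ℝ) ≤ η * τ / 4 := by nlinarith
  have ht2 : τ / 2 ≤ t := by rw [htdef]; nlinarith
  have h6 : (inner ℝ y w : ℝ) ≤ η / 2 := by
    by_contra hc2
    push_neg at hc2
    nlinarith
  linarith

private lemma subgrad_bound {H : Type*} [NormedAddCommGroup H] [InnerProductSpace ℝ H]
    {g : H → EReal} {p : H} {r₁ : ℝ} (hg0 : ∀ z, 0 ≤ g z) (hr₁ : 0 < r₁)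
    (hball : ∀ x : H, ‖x - p‖ < r₁ → g x < ((1 : ℝ) : EReal)) :
    ∀ x y : H, ‖x - p‖ < r₁ / 2 → y ∈ subdiff g x → ‖y‖ ≤ 4 / r₁ := by
  intro x y hx hy
  rcases eq_or_ne y 0 with rfl | hyne
  · simp
    positivity
  have hny : 0 < ‖y‖ := norm_pos_iff.2 hyne
  set u : H := (r₁ / 4 * ‖y‖⁻¹) • y with hudef
  have hun : ‖u‖ = r₁ / 4 := by
    rw [hudef, norm_smul, Real.norm_eq_abs, abs_of_pos (by positivity)]
    field_simp
  have hxu : ‖(x + u) - p‖ < r₁ := by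
    have he : (x + u) - p = (x - p) + u := by abel
    rw [he]
    calc ‖(x - p) + u‖ ≤ ‖x - p‖ + ‖u‖ := norm_add_le _ _
      _ < r₁ := by rw [hun]; linarith
  have h1 := hy (x + u)
  rw [add_sub_cancel_left] at h1
  have h2 : ((inner ℝ y u : ℝ) : EReal) < ((1 : ℝ) : EReal) :=
    lt_of_le_of_lt (le_trans (le_add_of_nonneg_left (hg0 x)) h1) (hball _ hxu)
  have h3 : (inner ℝ y u : ℝ) < 1 := by exact_mod_cast h2
  rw [hudef, real_inner_smul_right, real_inner_self_eq_norm_sq] at h3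
  have h4 : r₁ / 4 * ‖y‖ < 1 := by
    have he2 : (r₁ / 4 * ‖y‖⁻¹) * ‖y‖ ^ 2 = r₁ / 4 * ‖y‖ := by
      field_simp
    linarith [he2 ▸ h3]
  rw [le_div_iff₀ hr₁]
  nlinarith
theorem alexandrov_part_two
    {H : Type*} [NormedAddCommGroup H] [InnerProductSpace ℝ H]
    [CompleteSpace H] [SecondCountableTopology H]
    (f g : H → EReal) (hf : ProperLscConvex f) (hg : ProperLscConvex g)
    (p : H) (u₀ : H)
    (hfp : subdiff f p = {u₀}) (hgp : subdiff g p = {(0 : H)})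
    (hne : u₀ ≠ 0)
    (hfp0 : f p = 0) (hgp0 : g p = 0)
    (hfc : ContinuousAt f p) (hgc : ContinuousAt g p) :
    ∃ ε : ℝ, 0 < ε ∧
      ∀ x ∈ {x : H | ∃ y : H, subdiff g x = {y} ∧ ∃ h : H, g h < f h ∧ y ∈ subdiff f h},
        ε ≤ ‖x - p‖ := by
  obtain ⟨-, hfbot, -, -⟩ := hf
  have hgconv : EConvexOn g := hg.2.2.2
  have hg00 : (0 : H) ∈ subdiff g p := by rw [hgp]; rfl
  have hg0 : ∀ z, 0 ≤ g z := gnonneg hg00 hgp0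
  have h0nf : (0 : H) ∉ subdiff f p := by
    rw [hfp, Set.mem_singleton_iff]
    exact fun h => hne h.symm
  have hz₀ : ∃ z₀ : H, f z₀ < 0 := by
    by_contra hcc
    push_neg at hcc
    refine h0nf fun z => ?_
    simpa [hfp0] using hcc z
  obtain ⟨z₀, hz₀lt⟩ := hz₀
  set c : ℝ := (f z₀).toReal with hcdef
  have hfz₀top : f z₀ ≠ ⊤ := by
    intro h; rw [h] at hz₀lt; simp at hz₀lt
  have hfz₀ : f z₀ = (c : EReal) := (EReal.coe_toReal hfz₀top (hfbot z₀)).symm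
  have hc0 : c < 0 := by
    rw [hfz₀] at hz₀lt; exact_mod_cast hz₀lt
  set w : H := p - z₀ with hwdef
  obtain ⟨δ₁, hδ₁, hsmall⟩ := inner_small hgconv hgp hgp0 hgc w (η := -c / 4)
    (by linarith)
  obtain ⟨r₁, hr₁, hball⟩ := gball hgc hgp0 one_pos
  set K : ℝ := 4 / r₁ with hKdef
  have hK0 : 0 < K := by positivity
  set ε : ℝ := min (min δ₁ (r₁ / 2)) (-c / (4 * (K + 1))) with hεdef
  have hε0 : 0 < ε := by
    refine lt_min (lt_min hδ₁ (by positivity)) ?_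
    have : (0:ℝ) < -c := by linarith
    positivity
  refine ⟨ε, hε0, ?_⟩
  rintro x ⟨y, hgx, h, hgfh, hyf⟩
  by_contra hlt
  push_neg at hlt
  have hy : y ∈ subdiff g x := by rw [hgx]; rfl
  have hxδ : ‖x - p‖ < δ₁ :=
    lt_of_lt_of_le hlt ((min_le_left _ _).trans (min_le_left _ _))
  have hxr : ‖x - p‖ < r₁ / 2 :=
    lt_of_lt_of_le hlt ((min_le_left _ _).trans (min_le_right _ _))
  have hyK : ‖y‖ ≤ K := subgrad_bound hg0 hr₁ hball x y hxr hy
  have hyw : (inner ℝ y w : ℝ) < -c / 4 := hsmall x y hxδ hy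
  have hgx1 : g x < ((1 : ℝ) : EReal) := hball x (by linarith)
  set Gx : ℝ := (g x).toReal with hGxdef
  have hGx0 : 0 ≤ Gx := eToRealNonneg (hg0 x)
  have hgxc : g x = (Gx : EReal) :=
    (EReal.coe_toReal (eNeTop hgx1.le) (eNeBot (hg0 x))).symm
  have h3 := hyf z₀
  have hfhtop : f h ≠ ⊤ := by
    intro htp
    rw [htp, EReal.top_add_coe, hfz₀] at h3
    exact EReal.coe_ne_top c (top_le_iff.1 h3)
  set F : ℝ := (f h).toReal with hFdef
  have hfhc : f h = (F : EReal) := (EReal.coe_toReal hfhtop (hfbot h)).symm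
  have hghtop : g h ≠ ⊤ := eNeTop (le_of_lt (lt_of_lt_of_eq hgfh hfhc))
  set Gh : ℝ := (g h).toReal with hGhdef
  have hghc : g h = (Gh : EReal) := (EReal.coe_toReal hghtop (eNeBot (hg0 h))).symm
  have hGhF : Gh ≤ F := by
    rw [hghc, hfhc] at hgfh
    exact_mod_cast le_of_lt hgfh
  have h1 := hy h
  rw [hgxc, hghc, ← EReal.coe_add] at h1
  have h1r : Gx + (inner ℝ y (h - x) : ℝ) ≤ Gh := by exact_mod_cast h1
  rw [hfhc, hfz₀, ← EReal.coe_add] at h3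
  have h3r : F + (inner ℝ y (z₀ - h) : ℝ) ≤ c := by exact_mod_cast h3
  have hdec : (inner ℝ y (h - x) : ℝ) + (inner ℝ y (z₀ - h) : ℝ)
      = (inner ℝ y (z₀ - p) : ℝ) + (inner ℝ y (p - x) : ℝ) := by
    rw [← inner_add_right, ← inner_add_right]
    congr 1
    abel
  have hwz : (inner ℝ y (z₀ - p) : ℝ) = -(inner ℝ y w : ℝ) := by
    rw [hwdef, ← inner_neg_right]
    congr 1
    abel
  have hpx : -(K * ‖x - p‖) ≤ (inner ℝ y (p - x) : ℝ) := by
    have habs := abs_real_inner_le_norm y (p - x)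
    have hn : ‖p - x‖ = ‖x - p‖ := norm_sub_rev _ _
    have h9 : ‖y‖ * ‖p - x‖ ≤ K * ‖x - p‖ := by
      rw [hn]
      exact mul_le_mul_of_nonneg_right hyK (norm_nonneg _)
    have := abs_le.1 habs
    linarith [this.1]
  have hxb : K * ‖x - p‖ ≤ -c / 4 := by
    have h7 : ‖x - p‖ ≤ -c / (4 * (K + 1)) :=
      le_of_lt (lt_of_lt_of_le hlt (min_le_right _ _))
    have h8 : K * ‖x - p‖ ≤ K * (-c / (4 * (K + 1))) :=
      mul_le_mul_of_nonneg_left h7 hK0.le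
    have h10 : K * (-c / (4 * (K + 1))) ≤ -c / 4 := by
      rw [mul_comm, div_mul_eq_mul_div,
        div_le_div_iff₀ (by positivity) (by norm_num : (0:ℝ) < 4)]
      nlinarith
    linarith
  linarith

end
end

section
/- Let H be a real separable Hilbert space and let f, g : H → (-∞,+∞] be proper lower semicontinuous convex functions. Suppose p ∈ H is a point at which both f and g are finite and continuous, both ∂f(p) and ∂g(p) are singletons {∇f(p)} and {∇g(p)}, and ∇f(p) ≠ ∇g(p) = 0 while f(p) = g(p) = 0. Then there exists an open neighborhood U of p such that the set {x ∈ U : f(x) = g(x)} is contained in a Lipschitz hypersurface. -/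
open MeasureTheory Filter Topology

noncomputable section

open scoped RealInnerProductSpace

section Aux

set_option linter.unusedSectionVars false

variable {H : Type*} [NormedAddCommGroup H] [InnerProductSpace ℝ H]

lemma real_le_of_forall_pos {a b : ℝ} (h : ∀ ε > 0, a ≤ b + ε) : a ≤ b := by
  by_contra hlt
  push_neg at hlt
  have := h ((a - b)/2) (by linarith)
  linarith

lemma real_convex_aux {φ : H → EReal} (hconv : EConvexOn φ) (hbot : ∀ x, φ x ≠ ⊥)
    {x y : H} {ax ay : ℝ} (hx : φ x = (ax : EReal)) (hy : φ y = (ay : EReal))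
    {t : ℝ} (ht0 : 0 ≤ t) (ht1 : t ≤ 1) :
    (φ (t • x + (1 - t) • y)).toReal ≤ t * ax + (1 - t) * ay := by
  have h := hconv x y t ht0 ht1
  rw [hx, hy, ← EReal.coe_mul, ← EReal.coe_mul, ← EReal.coe_add] at h
  have h2 := EReal.toReal_le_toReal h (hbot _) (EReal.coe_ne_top _)
  rwa [EReal.toReal_coe] at h2

lemma fin_aux {φ : H → EReal} (hbot : ∀ x, φ x ≠ ⊥) {x : H}
    (h : φ x ∈ Set.Ioo (-1 : EReal) 1) : φ x = ((φ x).toReal : EReal) :=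
  (EReal.coe_toReal (ne_top_of_lt h.2) (hbot x)).symm

lemma toReal_le_one_aux {φ : H → EReal} (hbot : ∀ x, φ x ≠ ⊥) {x : H}
    (h : φ x ∈ Set.Ioo (-1 : EReal) 1) : (φ x).toReal ≤ 1 := by
  have h2 := EReal.toReal_le_toReal h.2.le (hbot x) (by
    rw [show (1 : EReal) = ((1:ℝ) : EReal) by norm_cast]; exact EReal.coe_ne_top _)
  rwa [show (1 : EReal) = ((1:ℝ) : EReal) by norm_cast, EReal.toReal_coe] at h2

lemma neg_one_le_toReal_aux {φ : H → EReal} (hbot : ∀ x, φ x ≠ ⊥) {x : H}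
    (h : φ x ∈ Set.Ioo (-1 : EReal) 1) : (-1 : ℝ) ≤ (φ x).toReal := by
  have he : (-1 : EReal) = ((-1:ℝ) : EReal) := by
    rw [EReal.coe_neg, EReal.coe_one]
  have h2 := EReal.toReal_le_toReal h.1.le (by
    rw [he]; exact EReal.coe_ne_bot _) (ne_top_of_lt h.2)
  rwa [he, EReal.toReal_coe] at h2

lemma lip_aux {φ : H → EReal} (hconv : EConvexOn φ) (hbot : ∀ x, φ x ≠ ⊥)
    {p : H} {r₁ : ℝ} (hr0 : 0 < r₁)
    (hball : ∀ x ∈ Metric.ball p r₁, φ x ∈ Set.Ioo (-1 : EReal) 1) :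
    ∀ x ∈ Metric.ball p (r₁/4), ∀ y ∈ Metric.ball p (r₁/4),
      (φ x).toReal - (φ y).toReal ≤ 4 / r₁ * ‖x - y‖ := by
  intro x hx y hy
  have hx1 : x ∈ Metric.ball p r₁ := Metric.ball_subset_ball (by linarith) hx
  have hy1 : y ∈ Metric.ball p r₁ := Metric.ball_subset_ball (by linarith) hy
  rcases eq_or_ne x y with rfl | hxy
  · simp
  have hm0 : (0:ℝ) < ‖x - y‖ := by
    rw [norm_pos_iff]; exact sub_ne_zero.2 hxy
  set m : ℝ := ‖x - y‖ with hm
  set dv : H := m⁻¹ • (x - y) with hdv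
  have hdv1 : ‖dv‖ = 1 := by
    rw [hdv, norm_smul, norm_inv, norm_norm, ← hm, inv_mul_cancel₀ hm0.ne']
  set hh : ℝ := r₁/2 with hhh
  set y' : H := x + hh • dv with hy'
  have hy'1 : y' ∈ Metric.ball p r₁ := by
    rw [Metric.mem_ball] at hx ⊢
    have : dist y' p ≤ dist x p + hh := by
      rw [hy']
      calc dist (x + hh • dv) p ≤ dist (x + hh • dv) x + dist x p := dist_triangle _ _ _
        _ = ‖hh • dv‖ + dist x p := by rw [dist_eq_norm, add_sub_cancel_left]
        _ = hh + dist x p := by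
            rw [norm_smul, hdv1, mul_one, Real.norm_eq_abs, abs_of_pos (by rw [hhh]; linarith)]
        _ = dist x p + hh := by ring
    linarith
  set t : ℝ := m / (m + hh) with ht
  have hhh0 : (0:ℝ) < hh := by rw [hhh]; linarith
  have hmh : (0:ℝ) < m + hh := by linarith
  have ht0 : 0 ≤ t := le_of_lt (div_pos hm0 hmh)
  have ht1 : t ≤ 1 := by
    rw [ht, div_le_one hmh]; linarith
  have hxy' : x - y = m • dv := by
    rw [hdv, smul_smul, mul_inv_cancel₀ hm0.ne', one_smul]
  have hpt : t • y' + (1 - t) • y = x := by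
    have h1 : y' - y = (m + hh) • dv := by
      rw [hy', add_smul, ← hxy']; abel
    have h2 : t • y' + (1 - t) • y = y + t • (y' - y) := by
      rw [smul_sub, sub_smul, one_smul]; abel
    rw [h2, h1, smul_smul, ht, div_mul_cancel₀ _ hmh.ne', ← hxy']
    abel
  have hc := real_convex_aux hconv hbot (fin_aux hbot (hball _ hy'1))
    (fin_aux hbot (hball _ hy1)) ht0 ht1
  rw [hpt] at hc
  have hb1 : (φ y').toReal ≤ 1 := toReal_le_one_aux hbot (hball _ hy'1)
  have hb2 : (-1:ℝ) ≤ (φ y).toReal := neg_one_le_toReal_aux hbot (hball _ hy1)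
  have key : (φ x).toReal - (φ y).toReal ≤ t * 2 := by nlinarith
  have h2t : t * 2 ≤ 4 / r₁ * m := by
    rw [ht, hhh]
    rw [div_mul_eq_mul_div, div_le_iff₀ hmh]
    have h4 : 4 / r₁ * m * (m + r₁/2) = 4/r₁ * m * m + 2 * m := by field_simp; ring
    nlinarith [mul_pos hm0 hm0, div_pos (by norm_num : (0:ℝ) < 4) hr0]
  calc (φ x).toReal - (φ y).toReal ≤ t * 2 := key
    _ ≤ 4 / r₁ * m := h2t
    _ = 4 / r₁ * ‖x - y‖ := by rw [hm]

lemma three_point_aux {φ : H → EReal} (hconv : EConvexOn φ) (hbot : ∀ x, φ x ≠ ⊥)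
    {p : H} {r₁ : ℝ}
    (hball : ∀ x ∈ Metric.ball p r₁, φ x ∈ Set.Ioo (-1 : EReal) 1)
    (a dv : H) (σ t : ℝ) (hσ : 0 < σ) (ht : 0 < t)
    (ha₁ : a - σ • dv ∈ Metric.ball p r₁) (ha₂ : a + t • dv ∈ Metric.ball p r₁)
    (ha : a ∈ Metric.ball p r₁) :
    ((φ a).toReal - (φ (a - σ • dv)).toReal) * t
      ≤ ((φ (a + t • dv)).toReal - (φ a).toReal) * σ := by
  set tt : ℝ := σ / (σ + t) with htt
  have hst : (0:ℝ) < σ + t := by linarith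
  have htt0 : 0 ≤ tt := le_of_lt (div_pos hσ hst)
  have htt1 : tt ≤ 1 := by rw [htt, div_le_one hst]; linarith
  have hpt : tt • (a + t • dv) + (1 - tt) • (a - σ • dv) = a := by
    match_scalars
    · ring
    · rw [htt]; field_simp; ring
  have hc := real_convex_aux hconv hbot (fin_aux hbot (hball _ ha₂))
    (fin_aux hbot (hball _ ha₁)) htt0 htt1
  rw [hpt] at hc
  set A := (φ a).toReal
  set B := (φ (a - σ • dv)).toReal
  set C := (φ (a + t • dv)).toReal
  have hc' : A * (σ + t) ≤ σ * C + t * B := by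
    have := mul_le_mul_of_nonneg_right hc hst.le
    have he1 : (tt * C + (1 - tt) * B) * (σ + t) = σ * C + t * B := by
      rw [htt]; field_simp; ring
    linarith [he1 ▸ this]
  nlinarith

set_option maxHeartbeats 2000000 in
lemma slope_key [CompleteSpace H] {φ : H → EReal} (hconv : EConvexOn φ) (hbot : ∀ x, φ x ≠ ⊥)
    {p ustar : H} (hsub : subdiff φ p = {ustar}) (hp0 : φ p = 0)
    {r₁ : ℝ} (hr0 : 0 < r₁) (hr1 : r₁ ≤ 1)
    (hball : ∀ x ∈ Metric.ball p r₁, φ x ∈ Set.Ioo (-1 : EReal) 1)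
    (d : H) (hd : d ≠ 0) (ε : ℝ) (hε : 0 < ε)
    (β : ℝ) (hβ0 : 0 < β) (hβ : β ≤ r₁ / 2 / (‖d‖ + 1)) :
    ∃ s : ℝ, 0 < s ∧ s < β ∧ (φ (p + s • d)).toReal < s * (⟪ustar, d⟫ + ε) := by
  by_contra hcon
  push_neg at hcon
  -- hcon : ∀ s, 0 < s → s < β → s * (⟪ustar, d⟫ + ε) ≤ (φ (p + s • d)).toReal
  have hp0' : φ p = ((0:ℝ) : EReal) := by rw [hp0]; norm_cast
  have hΦp : (φ p).toReal = 0 := by rw [hp0]; rfl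
  set α : H → ℝ := fun w => r₁ / 2 / (‖w‖ + 1) with hα
  have hα0 : ∀ w : H, 0 < α w := fun w =>
    div_pos (by linarith) (by positivity)
  have hαle : ∀ w : H, α w ≤ 1 / 2 := by
    intro w
    have h1 : α w ≤ r₁ / 2 := by
      rw [hα]
      exact div_le_self (by linarith) (by nlinarith [norm_nonneg w])
    linarith
  have hmem : ∀ (w : H) (s : ℝ), 0 < s → s < α w → p + s • w ∈ Metric.ball p r₁ := by
    intro w s hs hsα
    rw [Metric.mem_ball, dist_eq_norm, add_sub_cancel_left, norm_smul,
      Real.norm_eq_abs, abs_of_pos hs]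
    have h1 : s * ‖w‖ ≤ s * (‖w‖ + 1) := by nlinarith
    have h2 : s * (‖w‖ + 1) < α w * (‖w‖ + 1) := by
      have := norm_nonneg w; nlinarith
    have h3 : α w * (‖w‖ + 1) = r₁ / 2 := by
      rw [hα]; field_simp
    nlinarith
  set Q : H → ℝ → ℝ := fun w s => (φ (p + s • w)).toReal / s with hQ
  set T : H → ℝ → Set ℝ := fun w b => Q w '' Set.Ioo 0 b with hT
  set N : H → ℝ := fun w => sInf (T w (α w)) with hN
  have hQdef : ∀ (w : H) (s : ℝ), Q w s = (φ (p + s • w)).toReal / s := fun _ _ => rfl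
  have hNdef : ∀ w : H, N w = sInf (T w (α w)) := fun _ => rfl
  have hustar : ustar ∈ subdiff φ p := by rw [hsub]; exact Set.mem_singleton _
  have hQ_lb : ∀ (w : H) (s : ℝ), 0 < s → s < α w → ⟪ustar, w⟫ ≤ Q w s := by
    intro w s hs hsα
    have hz := hustar (p + s • w)
    rw [hp0, zero_add, add_sub_cancel_left, real_inner_smul_right] at hz
    have hfe := fin_aux hbot (hball _ (hmem w s hs hsα))
    rw [hfe] at hz
    have h2 : s * ⟪ustar, w⟫ ≤ (φ (p + s • w)).toReal := EReal.coe_le_coe_iff.mp hz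
    simp only [hQdef]
    rw [le_div_iff₀ hs]
    linarith [h2]
  have hT_ne : ∀ (w : H) (b : ℝ), 0 < b → (T w b).Nonempty := by
    intro w b hb
    exact ⟨Q w (b/2), ⟨b/2, ⟨half_pos hb, half_lt_self hb⟩, rfl⟩⟩
  have hT_bdd : ∀ (w : H) (b : ℝ), b ≤ α w → BddBelow (T w b) := by
    intro w b hb
    refine ⟨⟪ustar, w⟫, ?_⟩
    rintro y ⟨s, hs, rfl⟩
    exact hQ_lb w s hs.1 (lt_of_lt_of_le hs.2 hb)
  have hmono : ∀ (w : H) (s s' : ℝ), 0 < s → s ≤ s' → s' < α w → Q w s ≤ Q w s' := by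
    intro w s s' hs hss' hs'α
    have hs'0 : 0 < s' := lt_of_lt_of_le hs hss'
    set t : ℝ := s / s' with htdef
    have ht0 : 0 ≤ t := le_of_lt (div_pos hs hs'0)
    have ht1 : t ≤ 1 := by rw [htdef, div_le_one hs'0]; exact hss'
    have hts : t * s' = s := div_mul_cancel₀ s hs'0.ne'
    have hpt : t • (p + s' • w) + (1 - t) • p = p + s • w := by
      match_scalars
      · ring
      · rw [htdef]; field_simp
    have hc := real_convex_aux hconv hbot
      (fin_aux hbot (hball _ (hmem w s' hs'0 hs'α))) hp0' ht0 ht1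
    rw [hpt] at hc
    simp only [hQdef]
    rw [div_le_div_iff₀ hs hs'0]
    have h3 : t * (φ (p + s' • w)).toReal * s' = (φ (p + s' • w)).toReal * s := by
      rw [htdef]; field_simp
    nlinarith [hc]
  have hindep : ∀ (w : H) (b : ℝ), 0 < b → b ≤ α w → sInf (T w b) = N w := by
    intro w b hb0 hbα
    refine le_antisymm ?_ ?_
    · refine le_csInf (hT_ne w (α w) (hα0 w)) ?_
      rintro y ⟨s, hs, rfl⟩
      have hs''0 : 0 < min s (b/2) := lt_min hs.1 (half_pos hb0)
      have hs''b : min s (b/2) < b := lt_of_le_of_lt (min_le_right _ _) (half_lt_self hb0)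
      have h1 : Q w (min s (b/2)) ≤ Q w s := hmono w _ s hs''0 (min_le_left _ _) hs.2
      have h2 : sInf (T w b) ≤ Q w (min s (b/2)) :=
        csInf_le (hT_bdd w b hbα) ⟨min s (b/2), ⟨hs''0, hs''b⟩, rfl⟩
      linarith
    · exact csInf_le_csInf (hT_bdd w (α w) le_rfl) (hT_ne w b hb0)
        (Set.image_mono (Set.Ioo_subset_Ioo_right hbα))
  have hhom_le : ∀ (w : H) (c : ℝ), 0 < c → N (c • w) ≤ c * N w := by
    intro w c hc
    refine real_le_of_forall_pos ?_
    intro ε' hε'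
    set b : ℝ := min (α w) (c * α (c • w)) with hb
    have hb0 : 0 < b := lt_min (hα0 _) (mul_pos hc (hα0 _))
    have hEq := hindep w b hb0 (min_le_left _ _)
    have h1 : sInf (T w b) < N w + ε'/c := by
      rw [hEq]; have := div_pos hε' hc; linarith
    obtain ⟨y, ⟨σ, hσ, rfl⟩, hylt⟩ := exists_lt_of_csInf_lt (hT_ne w b hb0) h1
    have hσc : σ / c ∈ Set.Ioo (0:ℝ) (α (c • w)) := by
      constructor
      · exact div_pos hσ.1 hc
      · rw [div_lt_iff₀ hc]
        calc σ < b := hσ.2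
          _ ≤ c * α (c • w) := min_le_right _ _
          _ = α (c • w) * c := by ring
    have hQs : Q (c • w) (σ / c) = c * Q w σ := by
      simp only [hQdef]
      have h2 : (σ / c) • (c • w) = σ • w := by
        rw [smul_smul, div_mul_cancel₀ _ hc.ne']
      rw [h2]
      rw [div_div_eq_mul_div]
      field_simp
    have h3 : N (c • w) ≤ Q (c • w) (σ / c) :=
      csInf_le (hT_bdd (c • w) _ le_rfl) ⟨σ/c, hσc, rfl⟩
    have h4 : c * Q w σ < c * (N w + ε'/c) := by
      exact mul_lt_mul_of_pos_left hylt hc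
    have h5 : c * (N w + ε'/c) = c * N w + ε' := by
      rw [mul_add, mul_div_cancel₀ _ hc.ne']
    linarith [hQs ▸ h3]
  have hhom : ∀ (w : H) (c : ℝ), 0 < c → N (c • w) = c * N w := by
    intro w c hc
    refine le_antisymm (hhom_le w c hc) ?_
    have h1 := hhom_le (c • w) c⁻¹ (inv_pos.2 hc)
    rw [smul_smul, inv_mul_cancel₀ hc.ne', one_smul] at h1
    have h2 := mul_le_mul_of_nonneg_left h1 hc.le
    calc c * N w ≤ c * (c⁻¹ * N (c • w)) := h2
      _ = N (c • w) := by field_simp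
  have hN0 : N 0 = 0 := by
    have hTeq : T (0 : H) (α 0) = {0} := by
      ext y
      constructor
      · rintro ⟨s, hs, rfl⟩
        have : Q (0 : H) s = 0 := by
          simp only [hQdef]; simp [hΦp]
        simp [this]
      · rintro rfl
        exact ⟨α 0 / 2, ⟨half_pos (hα0 0), half_lt_self (hα0 0)⟩, by simp only [hQdef]; simp [hΦp]⟩
    simp only [hNdef, hTeq, csInf_singleton]
  have hsub_add : ∀ w₁ w₂ : H, N (w₁ + w₂) ≤ N w₁ + N w₂ := by
    intro w₁ w₂
    refine real_le_of_forall_pos ?_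
    intro ε' hε'
    have h₁ : sInf (T w₁ (α w₁)) < N w₁ + ε'/2 := by simp only [hNdef]; linarith
    have h₂ : sInf (T w₂ (α w₂)) < N w₂ + ε'/2 := by simp only [hNdef]; linarith
    obtain ⟨y₁, ⟨σ₁, hσ₁, rfl⟩, h₁lt⟩ := exists_lt_of_csInf_lt (hT_ne w₁ _ (hα0 w₁)) h₁
    obtain ⟨y₂, ⟨σ₂, hσ₂, rfl⟩, h₂lt⟩ := exists_lt_of_csInf_lt (hT_ne w₂ _ (hα0 w₂)) h₂
    set s : ℝ := min (min (σ₁/2) (σ₂/2)) (α (w₁ + w₂) / 2) with hsdef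
    have hs0 : 0 < s := lt_min (lt_min (half_pos hσ₁.1) (half_pos hσ₂.1)) (half_pos (hα0 _))
    have hs_sum : s < α (w₁ + w₂) :=
      lt_of_le_of_lt (min_le_right _ _) (half_lt_self (hα0 _))
    have h2s₁ : 2 * s ≤ σ₁ := by
      have := (min_le_left _ _ : s ≤ min (σ₁/2) (σ₂/2)).trans (min_le_left _ _)
      linarith
    have h2s₂ : 2 * s ≤ σ₂ := by
      have := (min_le_left _ _ : s ≤ min (σ₁/2) (σ₂/2)).trans (min_le_right _ _)
      linarith
    have hmem₁ : p + (2*s) • w₁ ∈ Metric.ball p r₁ :=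
      hmem w₁ (2*s) (by linarith) (lt_of_le_of_lt h2s₁ hσ₁.2)
    have hmem₂ : p + (2*s) • w₂ ∈ Metric.ball p r₁ :=
      hmem w₂ (2*s) (by linarith) (lt_of_le_of_lt h2s₂ hσ₂.2)
    have hpt : (1/2 : ℝ) • (p + (2*s) • w₁) + (1 - 1/2 : ℝ) • (p + (2*s) • w₂)
        = p + s • (w₁ + w₂) := by
      match_scalars <;> ring
    have hc := real_convex_aux hconv hbot (fin_aux hbot (hball _ hmem₁))
      (fin_aux hbot (hball _ hmem₂)) (by norm_num : (0:ℝ) ≤ 1/2) (by norm_num : (1/2:ℝ) ≤ 1)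
    rw [hpt] at hc
    have hq1 : Q (w₁ + w₂) s ≤ Q w₁ (2*s) + Q w₂ (2*s) := by
      simp only [hQdef]
      rw [div_add_div _ _ (by linarith : (2*s:ℝ) ≠ 0) (by linarith : (2*s:ℝ) ≠ 0)]
      rw [div_le_div_iff₀ hs0 (by nlinarith : (0:ℝ) < 2*s*(2*s))]
      nlinarith [hc]
    have hq2 : Q w₁ (2*s) ≤ Q w₁ σ₁ := hmono w₁ (2*s) σ₁ (by linarith) h2s₁ hσ₁.2
    have hq3 : Q w₂ (2*s) ≤ Q w₂ σ₂ := hmono w₂ (2*s) σ₂ (by linarith) h2s₂ hσ₂.2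
    have hq4 : N (w₁ + w₂) ≤ Q (w₁ + w₂) s :=
      csInf_le (hT_bdd _ _ le_rfl) ⟨s, ⟨hs0, hs_sum⟩, rfl⟩
    linarith
  have hub : ∀ w : H, N w ≤ 8 / r₁ * ‖w‖ := by
    have h1 : ∀ w : H, N w ≤ 4 * (‖w‖ + 1) / r₁ := by
      intro w
      have hs0 : 0 < α w / 2 := half_pos (hα0 w)
      have h2 : N w ≤ Q w (α w / 2) :=
        csInf_le (hT_bdd w _ le_rfl) ⟨α w / 2, ⟨hs0, half_lt_self (hα0 w)⟩, rfl⟩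
      have hsα2 : α w / 2 < α w := half_lt_self (hα0 w)
      have hto : (φ (p + (α w / 2) • w)).toReal ≤ 1 :=
        toReal_le_one_aux hbot (hball _ (hmem w _ hs0 hsα2))
      have h3 : Q w (α w / 2) ≤ 1 / (α w / 2) := by
        simp only [hQdef]
        gcongr
      have h4 : 1 / (α w / 2) = 4 * (‖w‖ + 1) / r₁ := by
        rw [hα]
        field_simp
        ring
      linarith
    intro w
    rcases eq_or_ne w 0 with rfl | hw0
    · simp only [hN0, norm_zero, mul_zero]; exact le_rfl
    have hnw : (0:ℝ) < ‖w‖ := norm_pos_iff.2 hw0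
    have h2 := hhom (‖w‖⁻¹ • w) ‖w‖ hnw
    rw [smul_smul, mul_inv_cancel₀ hnw.ne', one_smul] at h2
    have h3 := h1 (‖w‖⁻¹ • w)
    have hn1 : ‖‖w‖⁻¹ • w‖ = 1 := by
      rw [norm_smul, norm_inv, norm_norm, inv_mul_cancel₀ hnw.ne']
    rw [hn1] at h3
    have h4 : N w ≤ ‖w‖ * (4 * (1 + 1) / r₁) := by
      rw [h2]
      exact mul_le_mul_of_nonneg_left h3 (norm_nonneg w)
    calc N w ≤ ‖w‖ * (4 * (1+1) / r₁) := h4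
      _ = 8 / r₁ * ‖w‖ := by ring
  -- N d is at least ⟪ustar, d⟫ + ε by the contradiction hypothesis
  have hβα : β ≤ α d := hβ
  have hNd_ge : ⟪ustar, d⟫ + ε ≤ N d := by
    rw [← hindep d β hβ0 hβα]
    refine le_csInf (hT_ne d β hβ0) ?_
    rintro y ⟨s, hs, rfl⟩
    have h1 := hcon s hs.1 hs.2
    simp only [hQdef]
    rw [le_div_iff₀ hs.1]
    linarith [h1]
  -- Hahn–Banach extension
  have hH : ∀ c : ℝ, c • d = 0 → c • N d = 0 := fun c hc =>
    (smul_eq_zero.1 hc).elim (fun hc0 => by rw [hc0, zero_smul])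
      fun hx' => absurd hx' hd
  set pm : H →ₗ.[ℝ] ℝ := LinearPMap.mkSpanSingleton' d (N d) hH with hpm
  have hNnegd : -N d ≤ N (-d) := by
    have h1 := hsub_add d (-d)
    rw [add_neg_cancel, hN0] at h1
    linarith
  have hpm_le : ∀ x : pm.domain, pm x ≤ N x := by
    rintro ⟨x, hx⟩
    have hx' : x ∈ Submodule.span ℝ {d} := hx
    obtain ⟨t, ht⟩ := Submodule.mem_span_singleton.mp hx'
    have hmem2 : t • d ∈ pm.domain := by rw [ht]; exact hx
    have hsubty : (⟨x, hx⟩ : pm.domain) = ⟨t • d, hmem2⟩ := Subtype.ext ht.symm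
    rw [hsubty]
    have happ2 : pm ⟨t • d, hmem2⟩ = t • N d :=
      LinearPMap.mkSpanSingleton'_apply d (N d) hH t hmem2
    rw [happ2, smul_eq_mul]
    show t * N d ≤ N (t • d)
    rcases lt_trichotomy t 0 with htneg | rfl | htpos
    · have he : t • d = (-t) • (-d) := by rw [neg_smul, smul_neg, neg_neg]
      rw [he, hhom (-d) (-t) (by linarith)]
      nlinarith [hNnegd]
    · simp only [zero_mul, zero_smul, hN0]; exact le_rfl
    · rw [hhom d t htpos]
  obtain ⟨gl, hgl_ext, hgl_le⟩ := exists_extension_of_le_sublinear pm N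
    (fun c hc x => hhom x c hc) hsub_add hpm_le
  have hgl_bound : ∀ x : H, ‖gl x‖ ≤ 8 / r₁ * ‖x‖ := by
    intro x
    rw [Real.norm_eq_abs, abs_le]
    constructor
    · have h1 : gl (-x) ≤ N (-x) := hgl_le (-x)
      have h2 : N (-x) ≤ 8 / r₁ * ‖x‖ := by
        have := hub (-x); rwa [norm_neg] at this
      have h3 : gl (-x) = -gl x := map_neg gl x
      linarith [h3 ▸ h1]
    · exact (hgl_le x).trans (hub x)
  set glc : H →L[ℝ] ℝ := LinearMap.mkContinuous gl (8 / r₁) hgl_bound with hglc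
  set u : H := (InnerProductSpace.toDual ℝ H).symm glc with hu
  have huip : ∀ x : H, ⟪u, x⟫ = gl x := by
    intro x
    rw [hu]
    exact InnerProductSpace.toDual_symm_apply
  have humem : u ∈ subdiff φ p := by
    intro z
    by_cases hzt : φ z = ⊤
    · rw [hzt]; exact le_top
    have hz : φ z = ((φ z).toReal : EReal) := (EReal.coe_toReal hzt (hbot z)).symm
    rcases eq_or_ne z p with rfl | hzp
    · rw [hp0]
      simp only [sub_self, inner_zero_right, EReal.coe_zero, add_zero, zero_add]
      exact le_rfl
    · set w : H := z - p with hw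
      have hw0 : w ≠ 0 := sub_ne_zero.2 hzp
      set a : ℝ := (φ z).toReal with ha
      have key : ⟪u, w⟫ ≤ a := by
        have h1 : gl w ≤ N w := hgl_le w
        have hs0 : 0 < α w / 2 := half_pos (hα0 w)
        have h2 : N w ≤ Q w (α w / 2) :=
          csInf_le (hT_bdd w _ le_rfl) ⟨α w / 2, ⟨hs0, half_lt_self (hα0 w)⟩, rfl⟩
        have h3 : Q w (α w / 2) ≤ a := by
          have ht1 : α w / 2 ≤ 1 := by have := hαle w; linarith
          have hpt : (α w / 2) • z + (1 - α w / 2) • p = p + (α w / 2) • w := by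
            rw [hw]; match_scalars <;> ring
          have hc := real_convex_aux hconv hbot hz hp0' hs0.le ht1
          rw [hpt] at hc
          simp only [hQdef]
          rw [div_le_iff₀ hs0]
          nlinarith [hc]
        rw [huip w]
        linarith
      rw [hp0, zero_add, hz]
      exact EReal.coe_le_coe_iff.2 key
  have hueq : u = ustar := by
    have h1 := humem
    rw [hsub] at h1
    exact h1
  have hfinal : ⟪ustar, d⟫ = N d := by
    have hdmem : d ∈ pm.domain := Submodule.mem_span_singleton_self d
    have h1 : gl d = pm ⟨d, hdmem⟩ := hgl_ext ⟨d, hdmem⟩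
    have h2 : pm ⟨d, hdmem⟩ = N d := LinearPMap.mkSpanSingleton'_apply_self d (N d) hH hdmem
    rw [← hueq, huip d, h1, h2]
  linarith [hNd_ge, hfinal ▸ le_refl (⟪ustar, d⟫)]

end Aux

set_option maxHeartbeats 2000000 in
theorem alexandrov_part_three
    {H : Type*} [NormedAddCommGroup H] [InnerProductSpace ℝ H]
    [CompleteSpace H] [SecondCountableTopology H]
    (f g : H → EReal) (hf : ProperLscConvex f) (hg : ProperLscConvex g)
    (p : H) (u₀ : H)
    (hfp : subdiff f p = {u₀}) (hgp : subdiff g p = {(0 : H)})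
    (hne : u₀ ≠ 0)
    (hfp0 : f p = 0) (hgp0 : g p = 0)
    (hfc : ContinuousAt f p) (hgc : ContinuousAt g p) :
    ∃ U : Set H, IsOpen U ∧ p ∈ U ∧
      ∃ S : Set H, IsLipschitzHypersurface S ∧ {x ∈ U | f x = g x} ⊆ S := by
  classical
  obtain ⟨-, hfbot, -, hfconv⟩ := hf
  obtain ⟨-, hgbot, -, hgconv⟩ := hg
  have hnu : 0 < ‖u₀‖ := norm_pos_iff.2 hne
  -- finiteness neighborhoods
  have h0mem : (0 : EReal) ∈ Set.Ioo (-1 : EReal) 1 := by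
    constructor
    · rw [show (-1 : EReal) = ((-1:ℝ):EReal) by rw [EReal.coe_neg, EReal.coe_one],
        show (0 : EReal) = ((0:ℝ):EReal) from EReal.coe_zero.symm]
      exact EReal.coe_lt_coe_iff.2 (by norm_num)
    · rw [show (1 : EReal) = ((1:ℝ):EReal) from EReal.coe_one.symm,
        show (0 : EReal) = ((0:ℝ):EReal) from EReal.coe_zero.symm]
      exact EReal.coe_lt_coe_iff.2 (by norm_num)
  have hf_ev : ∀ᶠ x in 𝓝 p, f x ∈ Set.Ioo (-1:EReal) 1 :=
    hfc.eventually (isOpen_Ioo.eventually_mem (by rw [hfp0]; exact h0mem))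
  have hg_ev : ∀ᶠ x in 𝓝 p, g x ∈ Set.Ioo (-1:EReal) 1 :=
    hgc.eventually (isOpen_Ioo.eventually_mem (by rw [hgp0]; exact h0mem))
  obtain ⟨rf', hrf0, hrf⟩ := Metric.eventually_nhds_iff_ball.mp hf_ev
  obtain ⟨rg', hrg0, hrg⟩ := Metric.eventually_nhds_iff_ball.mp hg_ev
  set r₁ : ℝ := min (min rf' rg') 1 with hr₁def
  have hr₁0 : 0 < r₁ := lt_min (lt_min hrf0 hrg0) one_pos
  have hr₁1 : r₁ ≤ 1 := min_le_right _ _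
  have hballf : ∀ x ∈ Metric.ball p r₁, f x ∈ Set.Ioo (-1:EReal) 1 := by
    intro x hx
    exact hrf x (Metric.ball_subset_ball ((min_le_left _ _).trans (min_le_left _ _)) hx)
  have hballg : ∀ x ∈ Metric.ball p r₁, g x ∈ Set.Ioo (-1:EReal) 1 := by
    intro x hx
    exact hrg x (Metric.ball_subset_ball ((min_le_left _ _).trans (min_le_right _ _)) hx)
  -- the direction
  set e : H := ‖u₀‖⁻¹ • u₀ with hedef
  have he1 : ‖e‖ = 1 := by
    rw [hedef, norm_smul, norm_inv, norm_norm, inv_mul_cancel₀ hnu.ne']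
  have he0 : e ≠ 0 := by
    intro h
    rw [h, norm_zero] at he1
    norm_num at he1
  have hue : ⟪u₀, e⟫ = ‖u₀‖ := by
    rw [hedef, real_inner_smul_right, real_inner_self_eq_norm_mul_norm]
    field_simp
  set ε : ℝ := ‖u₀‖ / 8 with hεdef
  have hε0 : 0 < ε := by positivity
  -- slope estimates at p
  obtain ⟨sf, hsf0, hsfβ, hsf⟩ := slope_key hfconv hfbot hfp hfp0 hr₁0 hr₁1 hballf
    (-e) (neg_ne_zero.2 he0) ε hε0 (r₁/8) (by linarith)
    (by rw [norm_neg, he1]; linarith)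
  obtain ⟨sg, hsg0, hsgβ, hsg⟩ := slope_key hgconv hgbot hgp hgp0 hr₁0 hr₁1 hballg
    e he0 ε hε0 (r₁/8) (by linarith) (by rw [he1]; linarith)
  have hsf' : (f (p - sf • e)).toReal < sf * (-‖u₀‖ + ε) := by
    have h1 : p + sf • (-e) = p - sf • e := by rw [smul_neg, ← sub_eq_add_neg]
    have h2 : ⟪u₀, -e⟫ = -‖u₀‖ := by rw [inner_neg_right, hue]
    rw [h1, h2] at hsf
    exact hsf
  have hsg' : (g (p + sg • e)).toReal < sg * ε := by
    have h2 : ⟪(0:H), e⟫ = 0 := inner_zero_left e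
    rw [h2, zero_add] at hsg
    exact hsg
  -- Lipschitz constants
  set L : ℝ := 4 / r₁ with hLdef
  have hL0 : 0 < L := by positivity
  have hlipf := lip_aux hfconv hfbot hr₁0 hballf
  have hlipg := lip_aux hgconv hgbot hr₁0 hballg
  set r : ℝ := min (min (r₁/16) (ε * sf / (2*L))) (ε * sg / (2*L)) with hrdef
  have hr0 : 0 < r := lt_min (lt_min (by positivity) (by positivity)) (by positivity)
  have hr16 : r ≤ r₁/16 := (min_le_left _ _).trans (min_le_left _ _)
  have hrsf : 2*L*r ≤ ε * sf := by
    have h1 : r ≤ ε * sf / (2*L) := (min_le_left _ _).trans (min_le_right _ _)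
    rw [le_div_iff₀ (by positivity : (0:ℝ) < 2*L)] at h1
    linarith
  have hrsg : 2*L*r ≤ ε * sg := by
    have h1 : r ≤ ε * sg / (2*L) := min_le_right _ _
    rw [le_div_iff₀ (by positivity : (0:ℝ) < 2*L)] at h1
    linarith
  set K : ℝ := 4 * L / ‖u₀‖ with hKdef
  have hK0 : 0 ≤ K := by positivity
  have hFp : (f p).toReal = 0 := by rw [hfp0]; rfl
  have hGp : (g p).toReal = 0 := by rw [hgp0]; rfl
  have hsub4 : Metric.ball p (r₁/4) ⊆ Metric.ball p r₁ :=
    Metric.ball_subset_ball (by linarith)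
  -- key Lipschitz-graph estimate
  have hkey : ∀ x ∈ Metric.ball p r, ∀ y ∈ Metric.ball p r, f x = g x → f y = g y →
      ⟪e, x - y⟫ ≤ K * ‖(x - y) - ⟪e, x - y⟫ • e‖ := by
    intro x hx y hy hfgx hfgy
    set t : ℝ := ⟪e, x - y⟫ with htd
    set z : H := (x - y) - t • e with hzd
    rcases le_or_gt t 0 with ht | ht
    · exact le_trans ht (by positivity)
    have hxp : ‖x - p‖ < r := by rw [← dist_eq_norm]; exact hx
    have hyp : ‖y - p‖ < r := by rw [← dist_eq_norm]; exact hy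
    have habs : t ≤ ‖x - y‖ := by
      have h1 := real_inner_le_norm e (x - y)
      rwa [he1, one_mul] at h1
    have hxy2 : ‖x - y‖ < 2*r := by
      have h1 : ‖x - y‖ ≤ ‖x - p‖ + ‖y - p‖ := by
        have := norm_sub_le (x - p) (y - p)
        have h2 : (x - p) - (y - p) = x - y := by abel
        rwa [h2] at this
      linarith
    -- memberships
    have hxq : x ∈ Metric.ball p (r₁/4) := by
      rw [Metric.mem_ball, dist_eq_norm]; linarith
    have hyq : y ∈ Metric.ball p (r₁/4) := by
      rw [Metric.mem_ball, dist_eq_norm]; linarith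
    have hsfe : ‖sf • e‖ = sf := by
      rw [norm_smul, he1, mul_one, Real.norm_eq_abs, abs_of_pos hsf0]
    have hsge : ‖sg • e‖ = sg := by
      rw [norm_smul, he1, mul_one, Real.norm_eq_abs, abs_of_pos hsg0]
    have hte : ‖t • e‖ = t := by
      rw [norm_smul, he1, mul_one, Real.norm_eq_abs, abs_of_pos ht]
    have hy1 : y - sf • e ∈ Metric.ball p (r₁/4) := by
      rw [Metric.mem_ball, dist_eq_norm]
      calc ‖y - sf • e - p‖ = ‖(y - p) + -(sf • e)‖ := by congr 1; abel
        _ ≤ ‖y - p‖ + ‖-(sf • e)‖ := norm_add_le _ _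
        _ = ‖y - p‖ + sf := by rw [norm_neg, hsfe]
        _ < r₁/4 := by linarith
    have hp1 : p - sf • e ∈ Metric.ball p (r₁/4) := by
      rw [Metric.mem_ball, dist_eq_norm]
      have h1 : p - sf • e - p = -(sf • e) := by abel
      rw [h1, norm_neg, hsfe]
      linarith
    have hyt : y + t • e ∈ Metric.ball p (r₁/4) := by
      rw [Metric.mem_ball, dist_eq_norm]
      calc ‖y + t • e - p‖ = ‖(y - p) + t • e‖ := by congr 1; abel
        _ ≤ ‖y - p‖ + ‖t • e‖ := norm_add_le _ _
        _ = ‖y - p‖ + t := by rw [hte]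
        _ < r₁/4 := by linarith
    have hxg : x + sg • e ∈ Metric.ball p (r₁/4) := by
      rw [Metric.mem_ball, dist_eq_norm]
      calc ‖x + sg • e - p‖ = ‖(x - p) + sg • e‖ := by congr 1; abel
        _ ≤ ‖x - p‖ + ‖sg • e‖ := norm_add_le _ _
        _ = ‖x - p‖ + sg := by rw [hsge]
        _ < r₁/4 := by linarith
    have hpg : p + sg • e ∈ Metric.ball p (r₁/4) := by
      rw [Metric.mem_ball, dist_eq_norm, add_sub_cancel_left, hsge]
      linarith
    have hxt : x - t • e ∈ Metric.ball p (r₁/4) := by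
      rw [Metric.mem_ball, dist_eq_norm]
      calc ‖x - t • e - p‖ = ‖(x - p) + -(t • e)‖ := by congr 1; abel
        _ ≤ ‖x - p‖ + ‖-(t • e)‖ := norm_add_le _ _
        _ = ‖x - p‖ + t := by rw [norm_neg, hte]
        _ < r₁/4 := by linarith
    -- f-side chain
    have h3f := three_point_aux hfconv hfbot hballf y e sf t hsf0 ht
      (hsub4 hy1) (hsub4 hyt) (hsub4 hyq)
    have l1 : (f p).toReal - (f y).toReal ≤ L * ‖p - y‖ := hlipf p (Metric.mem_ball_self (by linarith)) y hyq
    have l1' : -(L*r) ≤ (f y).toReal := by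
      have hpy : ‖p - y‖ ≤ r := by rw [norm_sub_rev]; linarith
      have : L * ‖p - y‖ ≤ L * r := mul_le_mul_of_nonneg_left hpy hL0.le
      rw [hFp] at l1
      linarith
    have l2 : (f (y - sf • e)).toReal - (f (p - sf • e)).toReal ≤ L * r := by
      have h1 := hlipf (y - sf • e) hy1 (p - sf • e) hp1
      have h2 : (y - sf • e) - (p - sf • e) = y - p := by abel
      rw [h2] at h1
      have h3 : L * ‖y - p‖ ≤ L * r := mul_le_mul_of_nonneg_left hyp.le hL0.le
      linarith
    have hstep1 : sf * (‖u₀‖ - 2*ε) ≤ (f y).toReal - (f (y - sf • e)).toReal := by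
      linarith [hsf', l1', l2, hrsf]
    have hstep3 : t * (‖u₀‖ - 2*ε) ≤ (f (y + t • e)).toReal - (f y).toReal := by
      have hh := mul_le_mul_of_nonneg_right hstep1 ht.le
      have h9 : sf * ((‖u₀‖ - 2*ε) * t)
          ≤ sf * ((f (y + t • e)).toReal - (f y).toReal) := by
        have hexp : sf * ((‖u₀‖ - 2*ε) * t) = sf * (‖u₀‖ - 2*ε) * t := by ring
        rw [hexp]
        calc sf * (‖u₀‖ - 2*ε) * t
            ≤ ((f y).toReal - (f (y - sf • e)).toReal) * t := hh
          _ ≤ ((f (y + t • e)).toReal - (f y).toReal) * sf := h3f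
          _ = sf * ((f (y + t • e)).toReal - (f y).toReal) := by ring
      have h10 := (mul_le_mul_iff_of_pos_left hsf0).mp h9
      linarith [h10]
    have l4 : (f (y + t • e)).toReal - (f x).toReal ≤ L * ‖z‖ := by
      have h1 := hlipf (y + t • e) hyt x hxq
      have h2 : (y + t • e) - x = -z := by rw [hzd]; abel
      rw [h2, norm_neg] at h1
      exact h1
    have hFx : t * (‖u₀‖ - 2*ε) - L * ‖z‖ ≤ (f x).toReal - (f y).toReal := by linarith
    -- g-side chain
    have h3g := three_point_aux hgconv hgbot hballg x e t sg ht hsg0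
      (hsub4 hxt) (hsub4 hxg) (hsub4 hxq)
    have m1 : (g (x + sg • e)).toReal - (g (p + sg • e)).toReal ≤ L * r := by
      have h1 := hlipg (x + sg • e) hxg (p + sg • e) hpg
      have h2 : (x + sg • e) - (p + sg • e) = x - p := by abel
      rw [h2] at h1
      have h3 : L * ‖x - p‖ ≤ L * r := mul_le_mul_of_nonneg_left hxp.le hL0.le
      linarith
    have m3 : -(L*r) ≤ (g x).toReal := by
      have h1 := hlipg p (Metric.mem_ball_self (by linarith)) x hxq
      have hpx : ‖p - x‖ ≤ r := by rw [norm_sub_rev]; linarith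
      have : L * ‖p - x‖ ≤ L * r := mul_le_mul_of_nonneg_left hpx hL0.le
      rw [hGp] at h1
      linarith
    have hstep4 : (g (x + sg • e)).toReal - (g x).toReal ≤ 2*ε*sg := by
      linarith [hsg', m1, m3, hrsg]
    have hstep5 : (g x).toReal - (g (x - t • e)).toReal ≤ 2*ε*t := by
      have hh := mul_le_mul_of_nonneg_right hstep4 ht.le
      have h9 : sg * ((g x).toReal - (g (x - t • e)).toReal) ≤ sg * (2*ε*t) := by
        calc sg * ((g x).toReal - (g (x - t • e)).toReal)
            = ((g x).toReal - (g (x - t • e)).toReal) * sg := by ring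
          _ ≤ ((g (x + sg • e)).toReal - (g x).toReal) * t := h3g
          _ ≤ 2*ε*sg * t := hh
          _ = sg * (2*ε*t) := by ring
      exact (mul_le_mul_iff_of_pos_left hsg0).mp h9
    have m4 : (g (x - t • e)).toReal - (g y).toReal ≤ L * ‖z‖ := by
      have h1 := hlipg (x - t • e) hxt y hyq
      have h2 : (x - t • e) - y = z := by rw [hzd]; abel
      rw [h2] at h1
      exact h1
    have hGx : (g x).toReal - (g y).toReal ≤ 2*ε*t + L * ‖z‖ := by linarith
    -- combine
    have hFGx : (f x).toReal = (g x).toReal := by rw [hfgx]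
    have hFGy : (f y).toReal = (g y).toReal := by rw [hfgy]
    have hmain : t * (‖u₀‖ - 4*ε) ≤ 2 * L * ‖z‖ := by
      have he1' : t * (‖u₀‖ - 4*ε) = t * (‖u₀‖ - 2*ε) - 2*ε*t := by ring
      rw [he1']
      linarith [hFx, hGx, hFGx, hFGy]
    have h4ε : ‖u₀‖ - 4*ε = ‖u₀‖/2 := by rw [hεdef]; ring
    rw [h4ε] at hmain
    rw [hKdef, div_mul_eq_mul_div, le_div_iff₀ hnu]
    have he2' : t * (‖u₀‖/2) ≤ 2*L*‖z‖ := by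
      calc t * (‖u₀‖/2) = t * (‖u₀‖/2) := rfl
        _ ≤ 2*L*‖z‖ := hmain
    linarith [he2']
  -- construct the hypersurface
  refine ⟨Metric.ball p r, Metric.isOpen_ball, Metric.mem_ball_self hr0, ?_⟩
  set A : Set H := {x ∈ Metric.ball p r | f x = g x} with hA
  set pr : H → H := fun x => x - ⟪e, x⟫ • e with hpr
  have hprdiff : ∀ x y : H, pr x - pr y = (x - y) - ⟪e, x - y⟫ • e := by
    intro x y
    simp only [hpr]
    rw [inner_sub_right, sub_smul]
    abel
  have hfull : ∀ x ∈ A, ∀ y ∈ A, |⟪e, x - y⟫| ≤ K * ‖pr x - pr y‖ := by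
    intro x hx y hy
    rw [abs_le]
    constructor
    · have h1 := hkey y hy.1 x hx.1 hy.2 hx.2
      have h2 : ⟪e, y - x⟫ = -⟪e, x - y⟫ := by rw [← neg_sub, inner_neg_right]
      rw [h2] at h1
      have h3 : (y - x) - (-⟪e, x - y⟫) • e = -((x - y) - ⟪e, x - y⟫ • e) := by
        rw [neg_smul]
        abel
      rw [h3, norm_neg, ← hprdiff] at h1
      linarith
    · have h1 := hkey x hx.1 y hy.1 hx.2 hy.2
      rw [← hprdiff] at h1
      exact h1
  set τ₀ : H → ℝ := fun zz => if h : ∃ x, x ∈ A ∧ pr x = zz then ⟪e, h.choose⟫ / ‖u₀‖ else 0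
    with hτ₀
  set Kn : NNReal := Real.toNNReal (K / ‖u₀‖) with hKn
  have hKco : (Kn : ℝ) = K / ‖u₀‖ := Real.coe_toNNReal _ (by positivity)
  have hlipon : LipschitzOnWith Kn τ₀ (pr '' A) := by
    refine LipschitzOnWith.of_dist_le_mul ?_
    rintro zz ⟨x1, hx1, rfl⟩ zz' ⟨x2, hx2, rfl⟩
    have h1 : ∃ x, x ∈ A ∧ pr x = pr x1 := ⟨x1, hx1, rfl⟩
    have h2 : ∃ x, x ∈ A ∧ pr x = pr x2 := ⟨x2, hx2, rfl⟩
    simp only [hτ₀]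
    rw [dif_pos h1, dif_pos h2]
    obtain ⟨hc1A, hc1p⟩ := h1.choose_spec
    obtain ⟨hc2A, hc2p⟩ := h2.choose_spec
    rw [Real.dist_eq, div_sub_div_same, abs_div, abs_of_pos hnu]
    rw [div_le_iff₀ hnu]
    have h3 : ⟪e, h1.choose⟫ - ⟪e, h2.choose⟫ = ⟪e, h1.choose - h2.choose⟫ := by
      rw [inner_sub_right]
    rw [h3]
    have h4 := hfull _ hc1A _ hc2A
    rw [hc1p, hc2p] at h4
    rw [dist_eq_norm, hKco]
    calc |⟪e, h1.choose - h2.choose⟫| ≤ K * ‖pr x1 - pr x2‖ := h4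
      _ = K / ‖u₀‖ * ‖pr x1 - pr x2‖ * ‖u₀‖ := by field_simp
  obtain ⟨τ, hτlip, hτeq⟩ := hlipon.extend_real
  refine ⟨(fun zz : H => zz + τ zz • u₀) '' ((Submodule.span ℝ {u₀})ᗮ : Set H),
    ⟨u₀, hne, τ, Kn, hτlip.lipschitzOnWith (s := ((Submodule.span ℝ {u₀})ᗮ : Set H)), rfl⟩, ?_⟩
  intro x hx
  have hxA : x ∈ A := hx
  refine ⟨pr x, ?_, ?_⟩
  · show pr x ∈ (Submodule.span ℝ {u₀})ᗮ
    rw [Submodule.mem_orthogonal]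
    intro w hw
    obtain ⟨c, rfl⟩ := Submodule.mem_span_singleton.mp hw
    rw [real_inner_smul_left]
    have h5 : ⟪u₀, pr x⟫ = 0 := by
      simp only [hpr]
      rw [inner_sub_right, real_inner_smul_right, hue]
      have h6 : ⟪e, x⟫ = ‖u₀‖⁻¹ * ⟪u₀, x⟫ := by
        rw [hedef, real_inner_smul_left]
      rw [h6]
      field_simp; ring
    rw [h5, mul_zero]
  · have hmemim : pr x ∈ pr '' A := ⟨x, hxA, rfl⟩
    have hτv : τ (pr x) = τ₀ (pr x) := (hτeq hmemim).symm
    have hex : ∃ x', x' ∈ A ∧ pr x' = pr x := ⟨x, hxA, rfl⟩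
    have hτ0v : τ₀ (pr x) = ⟪e, hex.choose⟫ / ‖u₀‖ := by
      simp only [hτ₀]
      rw [dif_pos hex]
    obtain ⟨hcA, hcp⟩ := hex.choose_spec
    have hinner : ⟪e, hex.choose⟫ = ⟪e, x⟫ := by
      have h1 := hfull _ hcA _ hxA
      rw [hcp, sub_self, norm_zero, mul_zero] at h1
      have h2 : ⟪e, hex.choose - x⟫ = 0 := abs_nonpos_iff.mp h1
      rw [inner_sub_right] at h2
      linarith
    show pr x + τ (pr x) • u₀ = x
    rw [hτv, hτ0v, hinner]
    have h7 : (⟪e, x⟫ / ‖u₀‖) • u₀ = ⟪e, x⟫ • e := by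
      rw [hedef, div_eq_mul_inv, mul_smul]
    rw [h7]
    simp only [hpr]
    abel

end
end

section
/- Let H be a real separable Hilbert space and let f, g : H → (-∞,+∞] be proper lower semicontinuous convex functions. Suppose the set D := {x ∈ H : ∂f(x) ∩ ∂g(x) ≠ ∅} is dense in an open convex set U contained in the interior of dom(f) intersected with the interior of dom(g), where dom(f) := {x : f(x) < +∞}. Then ∂f(x) = ∂g(x) for every x ∈ U. -/
open MeasureTheory Filter Topology

noncomputable section

section AuxSubdiff

variable {H : Type*} [NormedAddCommGroup H] [InnerProductSpace ℝ H]

open Metric Set Finset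

lemma aux_realIneq {f : H → EReal} {w z y : H} (hy : y ∈ subdiff f w)
    (hw1 : f w ≠ ⊤) (hw2 : f w ≠ ⊥) (hz1 : f z ≠ ⊤) (hz2 : f z ≠ ⊥) :
    (f w).toReal + (inner ℝ y (z - w) : ℝ) ≤ (f z).toReal := by
  have h := hy z
  rw [← EReal.coe_toReal hw1 hw2, ← EReal.coe_toReal hz1 hz2, ← EReal.coe_add,
    EReal.coe_le_coe_iff] at h
  exact h

lemma aux_convexOn {f : H → EReal} (hconv : EConvexOn f) {U : Set H} (hU : Convex ℝ U)
    (h1 : ∀ x ∈ U, f x ≠ ⊤) (h2 : ∀ x, f x ≠ ⊥) :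
    ConvexOn ℝ U (fun x => (f x).toReal) := by
  refine ⟨hU, fun x hx y hy a b ha hb hab => ?_⟩
  have hb' : b = 1 - a := by linarith
  have h := hconv x y a ha (by linarith)
  rw [← EReal.coe_toReal (h1 x hx) (h2 x), ← EReal.coe_toReal (h1 y hy) (h2 y),
    ← EReal.coe_mul, ← EReal.coe_mul, ← EReal.coe_add] at h
  subst hb'
  calc (f (a • x + (1 - a) • y)).toReal
      ≤ ((a * (f x).toReal + (1 - a) * (f y).toReal : ℝ) : EReal).toReal :=
        EReal.toReal_le_toReal h (h2 _) (EReal.coe_ne_top _)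
    _ = a * (f x).toReal + (1 - a) * (f y).toReal := EReal.toReal_coe _

lemma aux_bddAbove [CompleteSpace H] {f : H → EReal} (hlsc : LowerSemicontinuous f)
    {U : Set H} (hUo : IsOpen U) (h1 : ∀ x ∈ U, f x ≠ ⊤) (h2 : ∀ x, f x ≠ ⊥)
    {u₀ : H} (hu₀ : u₀ ∈ U) :
    ∃ x₁ ∈ U, ∃ n : ℕ, ∀ᶠ z in 𝓝 x₁, (f z).toReal ≤ n := by
  obtain ⟨r', hr', hball'⟩ := Metric.isOpen_iff.1 hUo u₀ hu₀
  set r := r' / 2 with hrdef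
  have hr : 0 < r := by positivity
  have hKU : closedBall u₀ r ⊆ U := by
    refine subset_trans ?_ hball'
    intro z hz
    rw [mem_closedBall] at hz
    rw [mem_ball]
    linarith
  have hKcl : IsClosed (closedBall u₀ r) := isClosed_closedBall
  haveI : CompleteSpace ↥(closedBall u₀ r) := hKcl.completeSpace_coe
  haveI : Nonempty ↥(closedBall u₀ r) := ⟨⟨u₀, mem_closedBall_self hr.le⟩⟩
  set S : ℕ → Set ↥(closedBall u₀ r) := fun n => {w | f ↑w ≤ ((n : ℝ) : EReal)} with hS
  have hScl : ∀ n, IsClosed (S n) := by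
    intro n
    have : IsClosed (f ⁻¹' Iic ((n : ℝ) : EReal)) := hlsc.isClosed_preimage _
    exact this.preimage continuous_subtype_val
  have hSun : ⋃ n, S n = Set.univ := by
    ext w
    simp only [mem_iUnion, Set.mem_univ, iff_true, hS, mem_setOf_eq]
    obtain ⟨n, hn⟩ := exists_nat_ge ((f ↑w).toReal)
    refine ⟨n, ?_⟩
    rw [← EReal.coe_toReal (h1 _ (hKU w.2)) (h2 _)]
    exact_mod_cast hn
  obtain ⟨n, ⟨w₀, hw₀⟩⟩ := nonempty_interior_of_iUnion_of_closed hScl hSun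
  rw [mem_interior_iff_mem_nhds, Metric.mem_nhds_iff] at hw₀
  obtain ⟨ε, hε, hballS⟩ := hw₀
  have hball : ∀ z : H, z ∈ closedBall u₀ r → dist z ↑w₀ < ε → f z ≤ ((n : ℝ) : EReal) := by
    intro z hz hd
    have : (⟨z, hz⟩ : ↥(closedBall u₀ r)) ∈ ball w₀ ε := by
      rw [mem_ball, Subtype.dist_eq]
      exact hd
    exact hballS this
  set t := min (ε / (2 * r)) (1 / 2) with ht
  have ht0 : 0 < t := lt_min (by positivity) (by norm_num)
  have ht1 : t ≤ 1 / 2 := min_le_right _ _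
  have htr : t * r ≤ ε / 2 := by
    have : t ≤ ε / (2 * r) := min_le_left _ _
    calc t * r ≤ ε / (2 * r) * r := by nlinarith
      _ = ε / 2 := by field_simp
  set x₁ := (w₀ : H) + t • (u₀ - (w₀ : H)) with hx₁
  set ρ := t * min ε r / 2 with hρ
  have hρ0 : 0 < ρ := by
    have := lt_min hε hr
    positivity
  have hw₀u₀ : dist (w₀ : H) u₀ ≤ r := mem_closedBall.1 w₀.2
  have hx₁u₀ : dist x₁ u₀ ≤ (1 - t) * r := by
    rw [hx₁, dist_eq_norm]
    have : (w₀ : H) + t • (u₀ - (w₀ : H)) - u₀ = (1 - t) • ((w₀ : H) - u₀) := by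
      module
    rw [this, norm_smul, Real.norm_eq_abs, abs_of_nonneg (by linarith)]
    have : ‖(w₀ : H) - u₀‖ ≤ r := by rw [← dist_eq_norm]; exact hw₀u₀
    nlinarith
  have hx₁w₀ : dist x₁ (w₀ : H) ≤ t * r := by
    rw [hx₁, dist_eq_norm]
    have : (w₀ : H) + t • (u₀ - (w₀ : H)) - (w₀ : H) = t • (u₀ - (w₀ : H)) := by module
    rw [this, norm_smul, Real.norm_eq_abs, abs_of_nonneg ht0.le]
    have : ‖u₀ - (w₀ : H)‖ ≤ r := by rw [← dist_eq_norm, dist_comm]; exact hw₀u₀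
    nlinarith
  have hsub : ∀ z ∈ ball x₁ ρ, z ∈ closedBall u₀ r ∧ dist z ↑w₀ < ε := by
    intro z hz
    rw [mem_ball] at hz
    constructor
    · rw [mem_closedBall]
      have h1 : dist z u₀ ≤ dist z x₁ + dist x₁ u₀ := dist_triangle _ _ _
      have h2 : ρ ≤ t * r / 2 := by
        have : min ε r ≤ r := min_le_right _ _
        rw [hρ]; nlinarith
      nlinarith
    · have h1 : dist z (w₀ : H) ≤ dist z x₁ + dist x₁ (w₀ : H) := dist_triangle _ _ _
      have h2 : ρ ≤ t * ε / 2 := by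
        have : min ε r ≤ ε := min_le_left _ _
        rw [hρ]; nlinarith
      nlinarith
  refine ⟨x₁, hKU (hsub x₁ (mem_ball_self hρ0)).1, n, ?_⟩
  filter_upwards [ball_mem_nhds x₁ hρ0] with z hz
  obtain ⟨hz1, hz2⟩ := hsub z hz
  have := hball z hz1 hz2
  calc (f z).toReal ≤ (((n : ℝ) : EReal)).toReal :=
        EReal.toReal_le_toReal this (h2 z) (EReal.coe_ne_top _)
    _ = (n : ℝ) := EReal.toReal_coe _

lemma aux_subgradBound {f : H → EReal} (h2 : ∀ x, f x ≠ ⊥) {x : H} {δ : ℝ} (hδ : 0 < δ)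
    (h1 : ∀ w ∈ ball x δ, f w ≠ ⊤) {K : NNReal}
    (hlip : LipschitzOnWith K (fun w => (f w).toReal) (ball x δ)) :
    ∀ w ∈ ball x (δ / 2), ∀ y ∈ subdiff f w, ‖y‖ ≤ K := by
  intro w hw y hy
  rcases eq_or_ne y 0 with rfl | hy0
  · simp
  have hyn : 0 < ‖y‖ := norm_pos_iff.2 hy0
  set z := w + ((δ / 4) / ‖y‖) • y with hz
  have hzw : dist z w = δ / 4 := by
    rw [hz, dist_eq_norm, add_sub_cancel_left, norm_smul, Real.norm_eq_abs,
      abs_of_nonneg (by positivity)]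
    field_simp
  have hwx : dist w x < δ / 2 := mem_ball.1 hw
  have hzx : z ∈ ball x δ := by
    rw [mem_ball]
    have := dist_triangle z w x
    linarith
  have hwx' : w ∈ ball x δ := by
    rw [mem_ball]; linarith
  have hinner : (inner ℝ y (z - w) : ℝ) = (δ / 4) * ‖y‖ := by
    rw [hz, add_sub_cancel_left, real_inner_smul_right, real_inner_self_eq_norm_sq]
    field_simp
  have hgrow := aux_realIneq hy (h1 w hwx') (h2 w) (h1 z hzx) (h2 z)
  rw [hinner] at hgrow
  have hlipd := hlip.dist_le_mul z hzx w hwx'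
  rw [Real.dist_eq, hzw] at hlipd
  have habs : (f z).toReal - (f w).toReal ≤ K * (δ / 4) :=
    le_trans (le_abs_self _) hlipd
  have : (δ / 4) * ‖y‖ ≤ K * (δ / 4) := by linarith
  calc ‖y‖ = (δ / 4) * ‖y‖ / (δ / 4) := by field_simp
    _ ≤ K * (δ / 4) / (δ / 4) := by gcongr
    _ = K := by field_simp

set_option maxHeartbeats 1600000 in
lemma aux_chain {f g : H → EReal}
    (hf2 : ∀ x, f x ≠ ⊥) (hg2 : ∀ x, g x ≠ ⊥)
    {c : H} {ρ K : ℝ} (hρ : 0 < ρ) (hK : 0 ≤ K)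
    (hf1 : ∀ w ∈ ball c (2 * ρ), f w ≠ ⊤) (hg1 : ∀ w ∈ ball c (2 * ρ), g w ≠ ⊤)
    (hKf : ∀ w ∈ ball c (2 * ρ), ∀ y ∈ subdiff f w, ‖y‖ ≤ K)
    (hKg : ∀ w ∈ ball c (2 * ρ), ∀ y ∈ subdiff g w, ‖y‖ ≤ K)
    (hdense : ∀ w ∈ ball c ρ, w ∈ closure {x : H | (subdiff f x ∩ subdiff g x).Nonempty})
    {d e : H} (hdD : (subdiff f d ∩ subdiff g d).Nonempty) (hdB : d ∈ ball c ρ)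
    (heD : (subdiff f e ∩ subdiff g e).Nonempty) (heB : e ∈ ball c ρ) :
    (f d).toReal - (g d).toReal ≤ (f e).toReal - (g e).toReal := by
  apply le_of_forall_pos_le_add
  intro η hη
  obtain ⟨m₀, hm₀⟩ := exists_nat_gt (8 * K * ρ / η)
  set m : ℕ := m₀ + 1 with hmdef
  have hmR : (8 : ℝ) * K * ρ / η < m := by
    calc (8 : ℝ) * K * ρ / η < m₀ := hm₀
      _ ≤ m := by exact_mod_cast Nat.le_succ m₀
  have hm0 : 0 < (m : ℝ) := by positivity
  have hm0' : m ≠ 0 := by omega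
  have hstep1 : 2 * K * (2 * ρ / m) ≤ η / 2 := by
    have h8 : 8 * K * ρ < m * η := by
      rw [div_lt_iff₀ hη] at hmR; linarith
    rw [show 2 * K * (2 * ρ / (m:ℝ)) = (4 * K * ρ) / m by ring, div_le_iff₀ hm0]
    nlinarith
  set ε : ℝ := min (η / (8 * K * m + 1)) (ρ / 2) with hεdef
  have hε : 0 < ε := lt_min (by positivity) (by positivity)
  have hε1 : ε ≤ ρ / 2 := min_le_right _ _
  have hε2 : 4 * K * m * ε ≤ η / 2 := by
    have h1 : ε ≤ η / (8 * K * m + 1) := min_le_left _ _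
    have h2 : (0:ℝ) < 8 * K * m + 1 := by positivity
    rw [le_div_iff₀ h2] at h1
    nlinarith
  set xpt : ℕ → H := fun i => d + ((i : ℝ) / m) • (e - d) with hxptdef
  have hxpt0 : xpt 0 = d := by simp [hxptdef]
  have hxptm : xpt m = e := by
    have : ((m : ℝ) / m) = 1 := by field_simp
    simp [hxptdef, this]
  set v : H := (m : ℝ)⁻¹ • (e - d) with hvdef
  have hxptstep : ∀ i : ℕ, xpt (i + 1) - xpt i = v := by
    intro i
    simp only [hxptdef, hvdef]
    have h1 : ((i + 1 : ℕ) : ℝ) / m = (i : ℝ) / m + (m:ℝ)⁻¹ := by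
      push_cast; field_simp
    rw [h1]
    module
  have hxptB : ∀ i ≤ m, xpt i ∈ ball c ρ := by
    intro i him
    set a : ℝ := (i : ℝ) / m with hadef
    have ha0 : 0 ≤ a := by positivity
    have ha1 : a ≤ 1 := by
      rw [hadef, div_le_one hm0]; exact_mod_cast him
    have hid : xpt i - c = (1 - a) • (d - c) + a • (e - c) := by
      simp only [hxptdef, hadef]; module
    have hdc : ‖d - c‖ < ρ := by rw [← dist_eq_norm]; exact mem_ball.1 hdB
    have hec : ‖e - c‖ < ρ := by rw [← dist_eq_norm]; exact mem_ball.1 heB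
    rw [mem_ball, dist_eq_norm, hid]
    calc ‖(1 - a) • (d - c) + a • (e - c)‖ ≤ ‖(1 - a) • (d - c)‖ + ‖a • (e - c)‖ :=
          norm_add_le _ _
      _ = (1 - a) * ‖d - c‖ + a * ‖e - c‖ := by
          rw [norm_smul, norm_smul, Real.norm_eq_abs, Real.norm_eq_abs,
            abs_of_nonneg (by linarith), abs_of_nonneg ha0]
      _ ≤ max ‖d - c‖ ‖e - c‖ := by
          nlinarith [le_max_left ‖d - c‖ ‖e - c‖, le_max_right ‖d - c‖ ‖e - c‖]
      _ < ρ := max_lt hdc hec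
  have hsel : ∀ i : ℕ, ∃ p : H, (subdiff f p ∩ subdiff g p).Nonempty ∧
      dist p (xpt (min i m)) < ε := by
    intro i
    have hx := hxptB (min i m) (min_le_right _ _)
    have hcl := hdense _ hx
    rw [Metric.mem_closure_iff] at hcl
    obtain ⟨p, hpD, hpd⟩ := hcl ε hε
    exact ⟨p, hpD, by rwa [dist_comm]⟩
  choose pick hpickD hpickd using hsel
  set dd : ℕ → H := fun i => if i = 0 then d else if i = m then e else pick i with hddDef
  have hdd : ∀ i ≤ m, (subdiff f (dd i) ∩ subdiff g (dd i)).Nonempty ∧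
      dist (dd i) (xpt i) < ε := by
    intro i him
    by_cases h0 : i = 0
    · subst h0
      have hdd0 : dd 0 = d := by simp [hddDef]
      rw [hdd0, hxpt0]
      exact ⟨hdD, by simpa using hε⟩
    by_cases hm' : i = m
    · subst hm'
      have hddm : dd m = e := by simp [hddDef, hm0']
      rw [hddm, hxptm]
      exact ⟨heD, by simpa using hε⟩
    · have : dd i = pick i := by simp only [hddDef, if_neg h0, if_neg hm']
      rw [this]
      refine ⟨hpickD i, ?_⟩
      have := hpickd i
      rwa [min_eq_left him] at this
  have hddB : ∀ i ≤ m, dd i ∈ ball c (2 * ρ) := by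
    intro i him
    have h1 := (hdd i him).2
    have h2 := mem_ball.1 (hxptB i him)
    rw [mem_ball]
    have := dist_triangle (dd i) (xpt i) c
    linarith
  have hysel : ∀ i : ℕ, ∃ y : H,
      y ∈ subdiff f (dd (min i m)) ∧ y ∈ subdiff g (dd (min i m)) := by
    intro i
    obtain ⟨y, hy⟩ := (hdd (min i m) (min_le_right _ _)).1
    exact ⟨y, hy.1, hy.2⟩
  choose yy hyyf hyyg using hysel
  have hYf : ∀ i ≤ m, yy i ∈ subdiff f (dd i) := by
    intro i him; have := hyyf i; rwa [min_eq_left him] at this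
  have hYg : ∀ i ≤ m, yy i ∈ subdiff g (dd i) := by
    intro i him; have := hyyg i; rwa [min_eq_left him] at this
  have hyK : ∀ i ≤ m, ‖yy i‖ ≤ K := fun i him =>
    hKf (dd i) (hddB i him) (yy i) (hYf i him)
  have hstep : ∀ i < m,
      (inner ℝ (yy i - yy (i + 1)) (dd (i + 1) - dd i) : ℝ) ≤
      (((f (dd (i + 1))).toReal - (g (dd (i + 1))).toReal) -
        ((f (dd i)).toReal - (g (dd i)).toReal)) := by
    intro i hi
    have hi1 : i ≤ m := hi.le
    have hi2 : i + 1 ≤ m := hi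
    have h1 := aux_realIneq (hYf i hi1) (hf1 _ (hddB i hi1)) (hf2 _)
      (hf1 _ (hddB (i+1) hi2)) (hf2 _)
    have h2 := aux_realIneq (hYg (i+1) hi2) (hg1 _ (hddB (i+1) hi2)) (hg2 _)
      (hg1 _ (hddB i hi1)) (hg2 _)
    have e1 : (inner ℝ (yy i - yy (i+1)) (dd (i+1) - dd i) : ℝ) =
        (inner ℝ (yy i) (dd (i+1) - dd i) : ℝ) - (inner ℝ (yy (i+1)) (dd (i+1) - dd i) : ℝ) :=
      inner_sub_left _ _ _
    have e2 : (inner ℝ (yy (i+1)) (dd i - dd (i+1)) : ℝ) =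
        -(inner ℝ (yy (i+1)) (dd (i+1) - dd i) : ℝ) := by
      rw [show dd i - dd (i+1) = -(dd (i+1) - dd i) by abel, inner_neg_right]
    rw [e2] at h2
    linarith
  have htel : ∑ i ∈ range m,
      ((((f (dd (i + 1))).toReal - (g (dd (i + 1))).toReal) -
        ((f (dd i)).toReal - (g (dd i)).toReal))) =
      ((f e).toReal - (g e).toReal) - ((f d).toReal - (g d).toReal) := by
    rw [Finset.sum_range_sub (fun i => (f (dd i)).toReal - (g (dd i)).toReal) m]
    have hdd0 : dd 0 = d := by simp [hddDef]
    have hddm : dd m = e := by simp [hddDef, hm0']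
    rw [hdd0, hddm]
  have hsum : ∑ i ∈ range m, (inner ℝ (yy i - yy (i + 1)) (dd (i + 1) - dd i) : ℝ) ≤
      ((f e).toReal - (g e).toReal) - ((f d).toReal - (g d).toReal) := by
    rw [← htel]
    exact Finset.sum_le_sum fun i hi => hstep i (Finset.mem_range.1 hi)
  have hsplit : ∀ i < m, dd (i + 1) - dd i =
      v + ((dd (i + 1) - xpt (i + 1)) - (dd i - xpt i)) := by
    intro i _
    have := hxptstep i
    rw [← this]; abel
  have hinner_split : ∀ i < m, (inner ℝ (yy i - yy (i + 1)) (dd (i + 1) - dd i) : ℝ) =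
      (inner ℝ (yy i - yy (i + 1)) v : ℝ) +
      (inner ℝ (yy i - yy (i + 1)) ((dd (i + 1) - xpt (i + 1)) - (dd i - xpt i)) : ℝ) := by
    intro i hi
    rw [hsplit i hi, inner_add_right]
  have hvnorm : ‖v‖ ≤ 2 * ρ / m := by
    rw [hvdef, norm_smul, Real.norm_eq_abs, abs_of_nonneg (by positivity)]
    have hed : ‖e - d‖ ≤ 2 * ρ := by
      have h1 := mem_ball.1 heB
      have h2 := mem_ball.1 hdB
      have := dist_triangle e c d
      rw [dist_eq_norm, dist_eq_norm, dist_eq_norm] at *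
      have h4 := norm_sub_rev c d
      linarith
    rw [inv_mul_eq_div, div_le_div_iff₀ hm0 hm0]
    nlinarith
  have hfirst : ∑ i ∈ range m, (inner ℝ (yy i - yy (i + 1)) v : ℝ) ≥ -(η / 2) := by
    have htel2 : ∑ i ∈ range m, (inner ℝ (yy i - yy (i + 1)) v : ℝ) =
        (inner ℝ (yy 0 - yy m) v : ℝ) := by
      have : ∀ i, (inner ℝ (yy i - yy (i + 1)) v : ℝ) =
          (inner ℝ (yy i) v : ℝ) - (inner ℝ (yy (i + 1)) v : ℝ) := fun i => inner_sub_left _ _ _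
      simp_rw [this]
      rw [Finset.sum_range_sub' (fun i => (inner ℝ (yy i) v : ℝ)) m]
      rw [← inner_sub_left]
    rw [htel2]
    have habs : |(inner ℝ (yy 0 - yy m) v : ℝ)| ≤ (2 * K) * (2 * ρ / m) := by
      calc |(inner ℝ (yy 0 - yy m) v : ℝ)| ≤ ‖yy 0 - yy m‖ * ‖v‖ := abs_real_inner_le_norm _ _
        _ ≤ (2 * K) * (2 * ρ / m) := by
            have h1 : ‖yy 0 - yy m‖ ≤ 2 * K := by
              have := hyK 0 (Nat.zero_le m)
              have := hyK m le_rfl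
              have := norm_sub_le (yy 0) (yy m)
              linarith
            have h2 : (0:ℝ) ≤ 2 * ρ / m := by positivity
            have h3 : (0:ℝ) ≤ ‖yy 0 - yy m‖ := norm_nonneg _
            nlinarith [hvnorm]
    have := neg_abs_le (inner ℝ (yy 0 - yy m) v : ℝ)
    have h4 : (2 * K) * (2 * ρ / m) ≤ η / 2 := by
      calc (2 * K) * (2 * ρ / m) = 2 * K * (2 * ρ / m) := by ring
        _ ≤ η / 2 := hstep1
    linarith
  have hsecond : ∑ i ∈ range m,
      (inner ℝ (yy i - yy (i + 1)) ((dd (i + 1) - xpt (i + 1)) - (dd i - xpt i)) : ℝ) ≥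
      -(η / 2) := by
    have hterm : ∀ i < m,
        (inner ℝ (yy i - yy (i + 1)) ((dd (i + 1) - xpt (i + 1)) - (dd i - xpt i)) : ℝ) ≥
        -(4 * K * ε) := by
      intro i hi
      have hi1 : i ≤ m := hi.le
      have hi2 : i + 1 ≤ m := hi
      have habs : |(inner ℝ (yy i - yy (i + 1)) ((dd (i + 1) - xpt (i + 1)) - (dd i - xpt i)) : ℝ)|
          ≤ (2 * K) * (2 * ε) := by
        calc |(inner ℝ (yy i - yy (i + 1)) ((dd (i + 1) - xpt (i + 1)) - (dd i - xpt i)) : ℝ)|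
            ≤ ‖yy i - yy (i + 1)‖ * ‖(dd (i + 1) - xpt (i + 1)) - (dd i - xpt i)‖ :=
              abs_real_inner_le_norm _ _
          _ ≤ (2 * K) * (2 * ε) := by
              have h1 : ‖yy i - yy (i + 1)‖ ≤ 2 * K := by
                have := hyK i hi1
                have := hyK (i + 1) hi2
                have := norm_sub_le (yy i) (yy (i + 1))
                linarith
              have h2 : ‖(dd (i + 1) - xpt (i + 1)) - (dd i - xpt i)‖ ≤ 2 * ε := by
                have ha := (hdd (i + 1) hi2).2
                have hb := (hdd i hi1).2
                rw [dist_eq_norm] at ha hb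
                have := norm_sub_le (dd (i + 1) - xpt (i + 1)) (dd i - xpt i)
                linarith
              have h3 : (0:ℝ) ≤ ‖yy i - yy (i + 1)‖ := norm_nonneg _
              have h4 : (0:ℝ) ≤ 2 * ε := by positivity
              nlinarith
      have := neg_abs_le (inner ℝ (yy i - yy (i + 1))
        ((dd (i + 1) - xpt (i + 1)) - (dd i - xpt i)) : ℝ)
      have : -(2 * K * (2 * ε)) ≤ (inner ℝ (yy i - yy (i + 1))
          ((dd (i + 1) - xpt (i + 1)) - (dd i - xpt i)) : ℝ) := by linarith
      linarith
    calc ∑ i ∈ range m,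
        (inner ℝ (yy i - yy (i + 1)) ((dd (i + 1) - xpt (i + 1)) - (dd i - xpt i)) : ℝ)
        ≥ ∑ _i ∈ range m, -(4 * K * ε) := by
          exact Finset.sum_le_sum fun i hi => hterm i (Finset.mem_range.1 hi)
      _ = -(m * (4 * K * ε)) := by
          rw [Finset.sum_const, Finset.card_range]
          simp [mul_comm]
      _ ≥ -(η / 2) := by
          have : (m:ℝ) * (4 * K * ε) = 4 * K * m * ε := by ring
          rw [this]
          linarith
  have hcomb : ∑ i ∈ range m, (inner ℝ (yy i - yy (i + 1)) (dd (i + 1) - dd i) : ℝ) ≥ -η := by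
    calc ∑ i ∈ range m, (inner ℝ (yy i - yy (i + 1)) (dd (i + 1) - dd i) : ℝ)
        = ∑ i ∈ range m, ((inner ℝ (yy i - yy (i + 1)) v : ℝ) +
          (inner ℝ (yy i - yy (i + 1)) ((dd (i + 1) - xpt (i + 1)) - (dd i - xpt i)) : ℝ)) := by
          apply Finset.sum_congr rfl
          intro i hi
          exact hinner_split i (Finset.mem_range.1 hi)
      _ = (∑ i ∈ range m, (inner ℝ (yy i - yy (i + 1)) v : ℝ)) +
          ∑ i ∈ range m,
            (inner ℝ (yy i - yy (i + 1)) ((dd (i + 1) - xpt (i + 1)) - (dd i - xpt i)) : ℝ) :=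
          Finset.sum_add_distrib
      _ ≥ -(η / 2) + -(η / 2) := add_le_add hfirst hsecond
      _ = -η := by ring
  linarith [hsum, hcomb]

lemma aux_sub {f g : H → EReal} (hf2 : ∀ x, f x ≠ ⊥) (hg2 : ∀ x, g x ≠ ⊥)
    (hgc : EConvexOn g) {x : H} {δ c : ℝ} (hδ : 0 < δ)
    (hf1 : ∀ w ∈ ball x δ, f w ≠ ⊤) (hg1 : ∀ w ∈ ball x δ, g w ≠ ⊤)
    (hc : ∀ w ∈ ball x δ, (f w).toReal = (g w).toReal + c) :
    subdiff f x ⊆ subdiff g x := by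
  intro y hy z
  by_cases hzt : g z = ⊤
  · rw [hzt]; exact le_top
  by_cases hzx : z = x
  · subst hzx
    simp
  have hzx0 : (0:ℝ) < ‖z - x‖ := norm_pos_iff.2 (sub_ne_zero.2 hzx)
  set t := min (δ / (2 * ‖z - x‖)) (1 / 2) with htdef
  have ht0 : 0 < t := lt_min (by positivity) (by norm_num)
  have ht1 : t ≤ 1 / 2 := min_le_right _ _
  have httr : t * ‖z - x‖ ≤ δ / 2 := by
    have h1 : t ≤ δ / (2 * ‖z - x‖) := min_le_left _ _
    rw [le_div_iff₀ (by positivity)] at h1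
    nlinarith
  set w := t • z + (1 - t) • x with hwdef
  have hwx : w - x = t • (z - x) := by rw [hwdef]; module
  have hwball : w ∈ ball x δ := by
    rw [mem_ball, dist_eq_norm, hwx, norm_smul, Real.norm_eq_abs, abs_of_nonneg ht0.le]
    linarith
  have hxball : x ∈ ball x δ := mem_ball_self hδ
  have h1 := aux_realIneq hy (hf1 x hxball) (hf2 x) (hf1 w hwball) (hf2 w)
  rw [hwx, real_inner_smul_right] at h1
  have h2 : (g w).toReal ≤ t * (g z).toReal + (1 - t) * (g x).toReal := by
    have h := hgc z x t ht0.le (by linarith)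
    rw [← hwdef] at h
    rw [← EReal.coe_toReal hzt (hg2 z), ← EReal.coe_toReal (hg1 x hxball) (hg2 x),
      ← EReal.coe_toReal (hg1 w hwball) (hg2 w), ← EReal.coe_mul, ← EReal.coe_mul,
      ← EReal.coe_add, EReal.coe_le_coe_iff] at h
    exact h
  have hcf := hc w hwball
  have hcx := hc x hxball
  have hkey : (g x).toReal + (inner ℝ y (z - x) : ℝ) ≤ (g z).toReal := by
    have hGw : (g x).toReal + t * (inner ℝ y (z - x) : ℝ) ≤ (g w).toReal := by
      rw [hcf, hcx] at h1; linarith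
    have ht : t * ((g x).toReal + (inner ℝ y (z - x) : ℝ)) ≤ t * (g z).toReal := by
      nlinarith
    exact le_of_mul_le_mul_left (by linarith [ht]) ht0
  rw [← EReal.coe_toReal (hg1 x hxball) (hg2 x), ← EReal.coe_toReal hzt (hg2 z),
    ← EReal.coe_add, EReal.coe_le_coe_iff]
  exact hkey

end AuxSubdiff

theorem subdifferentials_agree_of_dense
    {H : Type*} [NormedAddCommGroup H] [InnerProductSpace ℝ H]
    [CompleteSpace H] [SecondCountableTopology H]
    (f g : H → EReal) (hf : ProperLscConvex f) (hg : ProperLscConvex g)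
    (U : Set H) (hUo : IsOpen U) (hUconv : Convex ℝ U)
    (hUdom : U ⊆ interior {x : H | f x ≠ ⊤} ∩ interior {x : H | g x ≠ ⊤})
    (hdense : U ⊆ closure {x : H | (subdiff f x ∩ subdiff g x).Nonempty}) :
    ∀ x ∈ U, subdiff f x = subdiff g x := by
  classical
  intro x hx
  obtain ⟨-, hfB, hflsc, hfconv⟩ := hf
  obtain ⟨-, hgB, hglsc, hgconv⟩ := hg
  have hUf : ∀ w ∈ U, f w ≠ ⊤ := fun w hw => interior_subset (hUdom hw).1
  have hUg : ∀ w ∈ U, g w ≠ ⊤ := fun w hw => interior_subset (hUdom hw).2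
  have hFconv : ConvexOn ℝ U (fun w => (f w).toReal) := aux_convexOn hfconv hUconv hUf hfB
  have hGconv : ConvexOn ℝ U (fun w => (g w).toReal) := aux_convexOn hgconv hUconv hUg hgB
  obtain ⟨xF, hxFU, nF, hnF⟩ := aux_bddAbove hflsc hUo hUf hfB hx
  obtain ⟨xG, hxGU, nG, hnG⟩ := aux_bddAbove hglsc hUo hUg hgB hx
  have hbF : ∃ x₀ ∈ U, Filter.IsBoundedUnder (· ≤ ·) (𝓝 x₀) (fun w => (f w).toReal) :=
    ⟨xF, hxFU, (nF : ℝ), by simpa [Filter.eventually_map] using hnF⟩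
  have hbG : ∃ x₀ ∈ U, Filter.IsBoundedUnder (· ≤ ·) (𝓝 x₀) (fun w => (g w).toReal) :=
    ⟨xG, hxGU, (nG : ℝ), by simpa [Filter.eventually_map] using hnG⟩
  have hFlip : LocallyLipschitzOn U (fun w => (f w).toReal) :=
    ((hFconv.continuousOn_tfae hUo ⟨x, hx⟩).out 3 0).mp hbF
  have hGlip : LocallyLipschitzOn U (fun w => (g w).toReal) :=
    ((hGconv.continuousOn_tfae hUo ⟨x, hx⟩).out 3 0).mp hbG
  have hFcont : ContinuousOn (fun w => (f w).toReal) U := hFlip.continuousOn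
  have hGcont : ContinuousOn (fun w => (g w).toReal) U := hGlip.continuousOn
  obtain ⟨K₁, t₁, ht₁, hlip₁⟩ := hFlip hx
  obtain ⟨K₂, t₂, ht₂, hlip₂⟩ := hGlip hx
  rw [hUo.nhdsWithin_eq hx] at ht₁ ht₂
  obtain ⟨δ₁, hδ₁, hb₁⟩ := Metric.mem_nhds_iff.1 ht₁
  obtain ⟨δ₂, hδ₂, hb₂⟩ := Metric.mem_nhds_iff.1 ht₂
  obtain ⟨δ₃, hδ₃, hb₃⟩ := Metric.isOpen_iff.1 hUo x hx
  set δ : ℝ := min δ₁ (min δ₂ δ₃) with hδdef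
  have hδ : 0 < δ := lt_min hδ₁ (lt_min hδ₂ hδ₃)
  have hδle₁ : δ ≤ δ₁ := min_le_left _ _
  have hδle₂ : δ ≤ δ₂ := le_trans (min_le_right _ _) (min_le_left _ _)
  have hδle₃ : δ ≤ δ₃ := le_trans (min_le_right _ _) (min_le_right _ _)
  have hballU : Metric.ball x δ ⊆ U :=
    Set.Subset.trans (Metric.ball_subset_ball hδle₃) hb₃
  have hlipF : LipschitzOnWith K₁ (fun w => (f w).toReal) (Metric.ball x δ) :=
    hlip₁.mono (Set.Subset.trans (Metric.ball_subset_ball hδle₁) hb₁)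
  have hlipG : LipschitzOnWith K₂ (fun w => (g w).toReal) (Metric.ball x δ) :=
    hlip₂.mono (Set.Subset.trans (Metric.ball_subset_ball hδle₂) hb₂)
  have hsgF : ∀ w ∈ Metric.ball x (δ / 2), ∀ y ∈ subdiff f w, ‖y‖ ≤ K₁ :=
    aux_subgradBound hfB hδ (fun w hw => hUf w (hballU hw)) hlipF
  have hsgG : ∀ w ∈ Metric.ball x (δ / 2), ∀ y ∈ subdiff g w, ‖y‖ ≤ K₂ :=
    aux_subgradBound hgB hδ (fun w hw => hUg w (hballU hw)) hlipG
  set K : ℝ := max (K₁ : ℝ) (K₂ : ℝ) with hKdef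
  have hK0 : 0 ≤ K := le_trans K₁.coe_nonneg (le_max_left _ _)
  set ρ : ℝ := δ / 8 with hρdef
  have hρ : 0 < ρ := by positivity
  have h2ρ : Metric.ball x (2 * ρ) ⊆ Metric.ball x (δ / 2) :=
    Metric.ball_subset_ball (by rw [hρdef]; linarith)
  have hballU2 : Metric.ball x (2 * ρ) ⊆ U := fun w hw =>
    hballU (Metric.ball_subset_ball (by linarith) (h2ρ hw))
  have hρδ : Metric.ball x ρ ⊆ Metric.ball x δ :=
    Metric.ball_subset_ball (by rw [hρdef]; linarith)
  have hf1' : ∀ w ∈ Metric.ball x (2 * ρ), f w ≠ ⊤ := fun w hw => hUf w (hballU2 hw)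
  have hg1' : ∀ w ∈ Metric.ball x (2 * ρ), g w ≠ ⊤ := fun w hw => hUg w (hballU2 hw)
  have hKf' : ∀ w ∈ Metric.ball x (2 * ρ), ∀ y ∈ subdiff f w, ‖y‖ ≤ K :=
    fun w hw y hy => le_trans (hsgF w (h2ρ hw) y hy) (le_max_left _ _)
  have hKg' : ∀ w ∈ Metric.ball x (2 * ρ), ∀ y ∈ subdiff g w, ‖y‖ ≤ K :=
    fun w hw y hy => le_trans (hsgG w (h2ρ hw) y hy) (le_max_right _ _)
  have hdense' : ∀ w ∈ Metric.ball x ρ,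
      w ∈ closure {v : H | (subdiff f v ∩ subdiff g v).Nonempty} :=
    fun w hw => hdense (hballU (hρδ hw))
  have hchain : ∀ d e : H, (subdiff f d ∩ subdiff g d).Nonempty → d ∈ Metric.ball x ρ →
      (subdiff f e ∩ subdiff g e).Nonempty → e ∈ Metric.ball x ρ →
      (f d).toReal - (g d).toReal = (f e).toReal - (g e).toReal := by
    intro d e hdD hdB heD heB
    exact le_antisymm
      (aux_chain hfB hgB hρ hK0 hf1' hg1' hKf' hKg' hdense' hdD hdB heD heB)
      (aux_chain hfB hgB hρ hK0 hf1' hg1' hKf' hKg' hdense' heD heB hdD hdB)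
  obtain ⟨dstar, hdstarD, hdstardist⟩ := Metric.mem_closure_iff.1 (hdense hx) ρ hρ
  have hdstarB : dstar ∈ Metric.ball x ρ := by
    rw [Metric.mem_ball, dist_comm]; exact hdstardist
  have hconstD : ∀ w ∈ Metric.ball x ρ,
      (f w).toReal - (g w).toReal = (f dstar).toReal - (g dstar).toReal := by
    intro w hw
    have hwU : w ∈ U := hballU (hρδ hw)
    have hcont : ContinuousAt (fun v => (f v).toReal - (g v).toReal) w :=
      (hFcont.continuousAt (hUo.mem_nhds hwU)).sub (hGcont.continuousAt (hUo.mem_nhds hwU))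
    have hwBcl : w ∈ closure (Metric.ball x ρ ∩
        {v : H | (subdiff f v ∩ subdiff g v).Nonempty}) :=
      Metric.isOpen_ball.inter_closure ⟨hw, hdense' w hw⟩
    obtain ⟨u, hu, hulim⟩ := mem_closure_iff_seq_limit.1 hwBcl
    have hval : ∀ n, (f (u n)).toReal - (g (u n)).toReal =
        (f dstar).toReal - (g dstar).toReal := fun n =>
      hchain (u n) dstar (hu n).2 (hu n).1 hdstarD hdstarB
    have hlim1 : Filter.Tendsto (fun n => (f (u n)).toReal - (g (u n)).toReal)
        Filter.atTop (𝓝 ((f w).toReal - (g w).toReal)) := hcont.tendsto.comp hulim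
    have hlim2 : Filter.Tendsto (fun n => (f (u n)).toReal - (g (u n)).toReal)
        Filter.atTop (𝓝 ((f dstar).toReal - (g dstar).toReal)) := by
      simp only [hval]
      exact tendsto_const_nhds
    exact tendsto_nhds_unique hlim1 hlim2
  have hxB : x ∈ Metric.ball x ρ := Metric.mem_ball_self hρ
  have hcFG : ∀ w ∈ Metric.ball x ρ,
      (f w).toReal = (g w).toReal + ((f x).toReal - (g x).toReal) := by
    intro w hw
    have h1 := hconstD w hw
    have h2 := hconstD x hxB
    linarith
  have hcGF : ∀ w ∈ Metric.ball x ρ,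
      (g w).toReal = (f w).toReal + ((g x).toReal - (f x).toReal) := by
    intro w hw
    have h1 := hconstD w hw
    have h2 := hconstD x hxB
    linarith
  have hf1ρ : ∀ w ∈ Metric.ball x ρ, f w ≠ ⊤ := fun w hw => hUf w (hballU (hρδ hw))
  have hg1ρ : ∀ w ∈ Metric.ball x ρ, g w ≠ ⊤ := fun w hw => hUg w (hballU (hρδ hw))
  exact Set.Subset.antisymm
    (aux_sub hfB hgB hgconv hρ hf1ρ hg1ρ hcFG)
    (aux_sub hgB hfB hfconv hρ hg1ρ hf1ρ hcGF)

end
end
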